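/- arXiv:1802.03138 — 2 statements merged into one kernel-verified Lean document; each statement's English description precedes it below -/
import Mathlib

section
/- Let f, g and h be entire functions given by everywhere absolutely convergent vector valued Dirichlet series, and let p ≥ 0, q ≥ 0, m ≥ 0 be integers. Assume 0 < λ_h^{(m,p)}(g) ≤ ρ_h^{(m,p)}(g) < +∞. Then: (i) ρ_g^{(p,q)}(f) = 0 when ρ_h^{(m,q)}(f) = 0; (ii) λ_g^{(p,q)}(f) = 0 when λ_h^{(m,q)}(f) = 0; (iii) ρ_g^{(p,q)}(f) = +∞ when ρ_h^{(m,q)}(f) = +∞; and (iv) λ_g^{(p,q)}(f) = +∞ when λ_h^{(m,q)}(f) = +∞. -/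
open Filter Topology

noncomputable section

/-- An entire function given by an everywhere absolutely convergent
vector valued Dirichlet series, with coefficients in a Banach space `E`. -/
structure VVDS (E : Type*) [NormedAddCommGroup E] [NormedSpace ℂ E] [CompleteSpace E] where
  a : ℕ → E
  lam : ℕ → ℝ
  lam_pos : ∀ n, 0 < lam n
  lam_strictMono : StrictMono lam
  lam_tendsto : Tendsto lam atTop atTop
  log_index_bound : ∃ D : ℝ, ∀ᶠ n : ℕ in atTop, Real.log (n : ℝ) / lam n ≤ D
  coeff_decay : Tendsto (fun n => Real.log ‖a n‖ / lam n) atTop atBot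
  abs_conv : ∀ s : ℂ, Summable (fun n => Real.exp (s.re * lam n) * ‖a n‖)

variable {E F G : Type*} [NormedAddCommGroup E] [NormedSpace ℂ E] [CompleteSpace E]
  [NormedAddCommGroup F] [NormedSpace ℂ F] [CompleteSpace F]
  [NormedAddCommGroup G] [NormedSpace ℂ G] [CompleteSpace G]

/-- The entire function defined by the vector valued Dirichlet series. -/
def VVDS.toFun (f : VVDS E) (s : ℂ) : E := ∑' n, Complex.exp (s * (f.lam n : ℂ)) • f.a n

/-- The maximum modulus function `M_f(σ) = sup_t ‖f(σ+it)‖`. -/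
def VVDS.M (f : VVDS E) (σ : ℝ) : ℝ := ⨆ t : ℝ, ‖f.toFun ((σ : ℂ) + (t : ℂ) * Complex.I)‖

/-- The inverse function of the maximum modulus function. -/
def VVDS.Minv (f : VVDS E) (y : ℝ) : ℝ := sInf {σ : ℝ | y ≤ f.M σ}

/-- The (p,q)-th relative Ritt order of `f` with respect to `g`. -/
def relRittOrder (p q : ℕ) (f : VVDS E) (g : VVDS F) : EReal :=
  limsup (fun σ : ℝ =>
    ((Real.log^[p] (g.Minv (f.M σ)) / Real.log^[q] σ : ℝ) : EReal)) atTop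

/-- The (p,q)-th relative Ritt lower order of `f` with respect to `g`. -/
def relRittLowerOrder (p q : ℕ) (f : VVDS E) (g : VVDS F) : EReal :=
  liminf (fun σ : ℝ =>
    ((Real.log^[p] (g.Minv (f.M σ)) / Real.log^[q] σ : ℝ) : EReal)) atTop

/-- The (p,q)-th relative Ritt type of `f` with respect to `g`. -/
def relRittType (p q : ℕ) (f : VVDS E) (g : VVDS F) : EReal :=
  limsup (fun σ : ℝ =>
    ((Real.log^[p-1] (g.Minv (f.M σ)) /
      (Real.log^[q-1] σ) ^ (relRittOrder p q f g).toReal : ℝ) : EReal)) atTop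

/-- The (p,q)-th relative Ritt lower type of `f` with respect to `g`. -/
def relRittLowerType (p q : ℕ) (f : VVDS E) (g : VVDS F) : EReal :=
  liminf (fun σ : ℝ =>
    ((Real.log^[p-1] (g.Minv (f.M σ)) /
      (Real.log^[q-1] σ) ^ (relRittOrder p q f g).toReal : ℝ) : EReal)) atTop

/-- The (p,q)-th relative Ritt weak type of `f` with respect to `g`. -/
def relRittWeakType (p q : ℕ) (f : VVDS E) (g : VVDS F) : EReal :=
  liminf (fun σ : ℝ =>
    ((Real.log^[p-1] (g.Minv (f.M σ)) /
      (Real.log^[q-1] σ) ^ (relRittLowerOrder p q f g).toReal : ℝ) : EReal)) atTop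

/-- The growth indicator `τ̄_g^{(p,q)}(f)`. -/
def relRittUpperWeakType (p q : ℕ) (f : VVDS E) (g : VVDS F) : EReal :=
  limsup (fun σ : ℝ =>
    ((Real.log^[p-1] (g.Minv (f.M σ)) /
      (Real.log^[q-1] σ) ^ (relRittLowerOrder p q f g).toReal : ℝ) : EReal)) atTop

section Aux


def VVDS.T (f : VVDS E) (σ : ℝ) : ℝ := ∑' n, Real.exp (σ * f.lam n) * ‖f.a n‖

lemma VVDS.summable_norm (f : VVDS E) (σ : ℝ) :
    Summable (fun n => Real.exp (σ * f.lam n) * ‖f.a n‖) := by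
  simpa using f.abs_conv (σ : ℂ)

lemma VVDS.norm_term (f : VVDS E) (s : ℂ) (n : ℕ) :
    ‖Complex.exp (s * (f.lam n : ℂ)) • f.a n‖ = Real.exp (s.re * f.lam n) * ‖f.a n‖ := by
  rw [norm_smul, Complex.norm_exp]
  congr 2
  simp [Complex.mul_re]

lemma VVDS.summable_term (f : VVDS E) (s : ℂ) :
    Summable (fun n => Complex.exp (s * (f.lam n : ℂ)) • f.a n) := by
  apply Summable.of_norm
  simpa only [f.norm_term s] using f.abs_conv s

lemma VVDS.norm_toFun_le (f : VVDS E) (s : ℂ) : ‖f.toFun s‖ ≤ f.T s.re := by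
  refine (norm_tsum_le_tsum_norm ?_).trans_eq ?_
  · simpa only [f.norm_term s] using f.abs_conv s
  · exact tsum_congr fun n => f.norm_term s n

lemma VVDS.norm_line_le (f : VVDS E) (σ t : ℝ) :
    ‖f.toFun ((σ : ℂ) + (t : ℂ) * Complex.I)‖ ≤ f.T σ := by
  have := f.norm_toFun_le ((σ : ℂ) + (t : ℂ) * Complex.I)
  simpa using this

lemma VVDS.bddAbove_line (f : VVDS E) (σ : ℝ) :
    BddAbove (Set.range fun t : ℝ => ‖f.toFun ((σ : ℂ) + (t : ℂ) * Complex.I)‖) :=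
  ⟨f.T σ, by rintro x ⟨t, rfl⟩; exact f.norm_line_le σ t⟩

lemma VVDS.norm_le_M (f : VVDS E) (σ t : ℝ) :
    ‖f.toFun ((σ : ℂ) + (t : ℂ) * Complex.I)‖ ≤ f.M σ :=
  le_ciSup (f.bddAbove_line σ) t

lemma VVDS.M_le_T (f : VVDS E) (σ : ℝ) : f.M σ ≤ f.T σ :=
  ciSup_le fun t => f.norm_line_le σ t

lemma VVDS.M_nonneg (f : VVDS E) (σ : ℝ) : 0 ≤ f.M σ :=
  (norm_nonneg _).trans (f.norm_le_M σ 0)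

lemma VVDS.T_mono (f : VVDS E) : Monotone f.T := by
  intro x y hxy
  refine Summable.tsum_le_tsum (fun n => ?_) (f.summable_norm x) (f.summable_norm y)
  exact mul_le_mul_of_nonneg_right
    (Real.exp_le_exp.2 (mul_le_mul_of_nonneg_right hxy (f.lam_pos n).le)) (norm_nonneg _)

lemma VVDS.exists_coeff_ne_zero (f : VVDS E) : ∃ N, f.a N ≠ 0 := by
  have h := f.coeff_decay.eventually_le_atBot (-1)
  rcases h.exists with ⟨N, hN⟩
  refine ⟨N, fun h0 => ?_⟩
  rw [h0] at hN
  simp at hN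
  linarith

lemma VVDS.coeff_le_M (f : VVDS E) (σ : ℝ) (N : ℕ) :
    Real.exp (σ * f.lam N) * ‖f.a N‖ ≤ f.M σ := by
  classical
  set μ : ℕ → ℝ := fun n => f.lam n - f.lam N with hμ
  set e : ℕ → ℝ → ℂ := fun n t =>
    Complex.exp (((σ * f.lam n : ℝ) : ℂ) + (t : ℂ) * Complex.I * ((μ n : ℝ) : ℂ)) with he
  have habs : ∀ n (t : ℝ), ‖e n t‖ = Real.exp (σ * f.lam n) := by
    intro n t
    rw [Complex.norm_exp]
    congr 1
    simp [Complex.add_re, Complex.mul_re, Complex.mul_im]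
  have hcont : ∀ n, Continuous fun t : ℝ => e n t := by
    intro n
    apply Complex.continuous_exp.comp
    fun_prop
  -- the integrand
  set Φ : ℝ → E := fun t =>
    Complex.exp (-((t : ℂ) * Complex.I) * ((f.lam N : ℝ) : ℂ)) •
      f.toFun ((σ : ℂ) + (t : ℂ) * Complex.I) with hΦ
  have hΦnorm : ∀ t : ℝ, ‖Φ t‖ = ‖f.toFun ((σ : ℂ) + (t : ℂ) * Complex.I)‖ := by
    intro t
    rw [hΦ]
    simp only [norm_smul, Complex.norm_exp]
    have : (-((t : ℂ) * Complex.I) * ((f.lam N : ℝ) : ℂ)).re = 0 := by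
      simp [Complex.mul_re, Complex.mul_im]
    rw [this, Real.exp_zero, one_mul]
  have hpt : ∀ t : ℝ, Φ t = ∑' n, e n t • f.a n := by
    intro t
    rw [hΦ]
    simp only [VVDS.toFun]
    rw [← Summable.tsum_const_smul _ (f.summable_term _)]
    refine tsum_congr fun n => ?_
    rw [smul_smul, ← Complex.exp_add]
    congr 2
    push_cast [hμ]
    ring
  -- single-term integrals
  set S : ℕ → ℝ → ℂ := fun n T => ∫ t in (-T)..T, e n t with hS
  have hSabs : ∀ n T, 0 < T → ‖S n T‖ ≤ 2 * T * Real.exp (σ * f.lam n) := by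
    intro n T hT
    have := intervalIntegral.norm_integral_le_of_norm_le_const
      (a := -T) (b := T) (C := Real.exp (σ * f.lam n)) (f := fun t => e n t)
      (fun t _ => (habs n t).le)
    calc ‖S n T‖ ≤ Real.exp (σ * f.lam n) * |T - (-T)| := this
      _ = 2 * T * Real.exp (σ * f.lam n) := by
          rw [show T - (-T) = 2*T by ring, abs_of_pos (by linarith)]; ring
  have hSsmall : ∀ n, n ≠ N → ∀ T : ℝ, 0 < T →
      ‖S n T‖ ≤ 2 / |μ n| * Real.exp (σ * f.lam n) := by
    intro n hn T hT
    have hμne : μ n ≠ 0 := by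
      have := f.lam_strictMono.injective.ne hn
      simp [hμ, sub_eq_zero, this]
    have hc : (Complex.I * ((μ n : ℝ) : ℂ)) ≠ 0 := by
      simp [Complex.I_ne_zero, Complex.ofReal_eq_zero, hμne]
    have hcomp : S n T = Complex.exp ((σ * f.lam n : ℝ) : ℂ) *
        ((Complex.exp (Complex.I * ((μ n : ℝ) : ℂ) * (T : ℂ)) -
          Complex.exp (Complex.I * ((μ n : ℝ) : ℂ) * ((-T : ℝ) : ℂ))) /
          (Complex.I * ((μ n : ℝ) : ℂ))) := by
      have hrw : S n T = ∫ t in (-T)..T, Complex.exp ((σ * f.lam n : ℝ) : ℂ) *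
          Complex.exp ((Complex.I * ((μ n : ℝ) : ℂ)) * (t : ℂ)) := by
        simp only [hS]
        refine intervalIntegral.integral_congr fun t _ => ?_
        simp only [he]
        rw [← Complex.exp_add]; congr 1; ring
      rw [hrw, intervalIntegral.integral_const_mul, integral_exp_mul_complex hc]
    rw [hcomp]
    rw [norm_mul, norm_div]
    have h1 : ‖Complex.exp ((σ * f.lam n : ℝ) : ℂ)‖ = Real.exp (σ * f.lam n) := by
      rw [Complex.norm_exp, Complex.ofReal_re]
    have h2 : ∀ z : ℂ, z.re = 0 → ‖Complex.exp z‖ = 1 := by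
      intro z hz
      rw [Complex.norm_exp, hz, Real.exp_zero]
    have h3 : ‖Complex.exp (Complex.I * ((μ n : ℝ) : ℂ) * (T : ℂ)) -
        Complex.exp (Complex.I * ((μ n : ℝ) : ℂ) * ((-T : ℝ) : ℂ))‖ ≤ 2 := by
      refine (norm_sub_le _ _).trans ?_
      rw [h2 _ (by simp [Complex.mul_re, Complex.mul_im]), h2 _ (by simp [Complex.mul_re, Complex.mul_im])]
      norm_num
    have h4 : ‖Complex.I * ((μ n : ℝ) : ℂ)‖ = |μ n| := by
      rw [norm_mul]
      simp
    rw [h1, h4, mul_comm]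
    have hpos : 0 ≤ Real.exp (σ * f.lam n) := (Real.exp_pos _).le
    have hdiv : ‖Complex.exp (Complex.I * ((μ n : ℝ) : ℂ) * (T : ℂ)) -
        Complex.exp (Complex.I * ((μ n : ℝ) : ℂ) * ((-T : ℝ) : ℂ))‖ / |μ n| ≤ 2 / |μ n| := by
      gcongr
    exact mul_le_mul_of_nonneg_right hdiv hpos
  have hInt : ∀ (n : ℕ) (T : ℝ),
      MeasureTheory.IntegrableOn (fun t : ℝ => e n t • f.a n) (Set.Ioc (-T) T) := fun n T =>
    ((hcont n).smul continuous_const).integrableOn_Ioc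
  have hkey : ∀ T : ℝ, 0 < T →
      (∫ t in (-T)..T, Φ t) = ∑' n, S n T • f.a n := by
    intro T hT
    have hle : (-T) ≤ T := by linarith
    rw [intervalIntegral.integral_of_le hle]
    have hsumnorm : Summable fun n => ∫ t in Set.Ioc (-T) T, ‖e n t • f.a n‖ := by
      have hval : ∀ n, (∫ t in Set.Ioc (-T) T, ‖e n t • f.a n‖)
          = (2*T) * (Real.exp (σ * f.lam n) * ‖f.a n‖) := by
        intro n
        have hcf : (fun t : ℝ => ‖e n t • f.a n‖) = fun _ => Real.exp (σ * f.lam n) * ‖f.a n‖ :=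
          funext fun t => by rw [norm_smul, habs]
        rw [hcf, MeasureTheory.setIntegral_const, MeasureTheory.measureReal_def, Real.volume_Ioc, smul_eq_mul,
          ENNReal.toReal_ofReal (by linarith)]
        ring
      simpa only [hval] using (f.summable_norm σ).mul_left (2*T)
    have hswap := MeasureTheory.integral_tsum_of_summable_integral_norm
      (μ := MeasureTheory.volume.restrict (Set.Ioc (-T) T))
      (F := fun n (t : ℝ) => e n t • f.a n) (fun n => hInt n T) hsumnorm
    calc (∫ t in Set.Ioc (-T) T, Φ t)
        = ∫ t in Set.Ioc (-T) T, ∑' n, e n t • f.a n := by simp only [hpt]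
      _ = ∑' n, ∫ t in Set.Ioc (-T) T, e n t • f.a n := hswap.symm
      _ = ∑' n, S n T • f.a n := by
          refine tsum_congr fun n => ?_
          rw [integral_smul_const]
          congr 1
          simp only [hS]
          rw [intervalIntegral.integral_of_le hle]
  set c : ℂ := Complex.exp ((σ * f.lam N : ℝ) : ℂ) with hcdef
  have hSN : ∀ T : ℝ, S N T = ((2*T : ℝ) : ℂ) * c := by
    intro T
    have : ∀ t : ℝ, e N t = c := by
      intro t
      simp only [he, hcdef]
      congr 1
      simp [hμ]
    simp only [hS]
    rw [show (fun t : ℝ => e N t) = fun _ : ℝ => c from funext this]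
    rw [intervalIntegral.integral_const, Complex.real_smul]
    push_cast
    ring
  have hlim : Tendsto (fun T => ∑' n, (((2*T)⁻¹ : ℝ) : ℂ) • (S n T • f.a n)) atTop
      (𝓝 (c • f.a N)) := by
    have hmain := tendsto_tsum_of_dominated_convergence (𝓕 := atTop)
      (f := fun T n => (((2*T)⁻¹ : ℝ) : ℂ) • (S n T • f.a n))
      (g := fun n => if n = N then c • f.a N else 0)
      (bound := fun n => Real.exp (σ * f.lam n) * ‖f.a n‖) (f.summable_norm σ) ?_ ?_
    · have : (∑' n, if n = N then c • f.a N else 0) = c • f.a N := tsum_ite_eq N (fun _ => c • f.a N)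
      rwa [this] at hmain
    · intro k
      by_cases hk : k = N
      · subst hk
        simp only [if_pos rfl]
        apply Tendsto.congr' (f₁ := fun _ => c • f.a k)
        · filter_upwards [eventually_gt_atTop (0:ℝ)] with T hT
          rw [hSN, smul_smul, ← mul_assoc, ← Complex.ofReal_mul,
            inv_mul_cancel₀ (by positivity : (2*T:ℝ) ≠ 0), Complex.ofReal_one, one_mul]
        · exact tendsto_const_nhds
      · simp only [if_neg hk]
        rw [tendsto_zero_iff_norm_tendsto_zero]
        apply squeeze_zero' (g := fun T => (2*T)⁻¹ * ((2 / |μ k| * Real.exp (σ * f.lam k)) * ‖f.a k‖))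
        · filter_upwards with T; positivity
        · filter_upwards [eventually_gt_atTop (0:ℝ)] with T hT
          rw [norm_smul, norm_smul]
          have h2T : ‖(((2*T)⁻¹ : ℝ) : ℂ)‖ = (2*T)⁻¹ := by
            rw [Complex.norm_real, Real.norm_eq_abs, abs_of_pos (by positivity)]
          rw [h2T]
          have := hSsmall k hk T hT
          have hM : ‖S k T‖ * ‖f.a k‖ ≤ (2 / |μ k| * Real.exp (σ * f.lam k)) * ‖f.a k‖ :=
            mul_le_mul_of_nonneg_right this (norm_nonneg _)
          calc (2*T)⁻¹ * (‖S k T‖ * ‖f.a k‖)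
              ≤ (2*T)⁻¹ * ((2 / |μ k| * Real.exp (σ * f.lam k)) * ‖f.a k‖) := by
                exact mul_le_mul_of_nonneg_left hM (by positivity)
            _ = _ := rfl
        · have h2 : Tendsto (fun T : ℝ => 2*T) atTop atTop :=
            Tendsto.const_mul_atTop two_pos tendsto_id
          have h1 : Tendsto (fun T : ℝ => (2*T)⁻¹) atTop (𝓝 0) :=
            Tendsto.comp tendsto_inv_atTop_zero h2
          simpa using h1.mul_const ((2 / |μ k| * Real.exp (σ * f.lam k)) * ‖f.a k‖)
    · filter_upwards [eventually_gt_atTop (0:ℝ)] with T hT k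
      rw [norm_smul, norm_smul]
      have h2T : ‖(((2*T)⁻¹ : ℝ) : ℂ)‖ = (2*T)⁻¹ := by
        rw [Complex.norm_real, Real.norm_eq_abs, abs_of_pos (by positivity)]
      rw [h2T]
      have hb := hSabs k T hT
      calc (2*T)⁻¹ * (‖S k T‖ * ‖f.a k‖)
          ≤ (2*T)⁻¹ * ((2 * T * Real.exp (σ * f.lam k)) * ‖f.a k‖) :=
            mul_le_mul_of_nonneg_left (mul_le_mul_of_nonneg_right hb (norm_nonneg _))
              (by positivity)
        _ = Real.exp (σ * f.lam k) * ‖f.a k‖ := by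
            field_simp
  have hJlim : Tendsto (fun T => (((2*T)⁻¹ : ℝ) : ℂ) • ∫ t in (-T)..T, Φ t) atTop
      (𝓝 (c • f.a N)) := by
    refine hlim.congr' ?_
    filter_upwards [eventually_gt_atTop (0:ℝ)] with T hT
    have hsummand : Summable (fun n => S n T • f.a n) := by
      apply Summable.of_norm_bounded (g := fun n => (2*T) * (Real.exp (σ * f.lam n) * ‖f.a n‖))
        ((f.summable_norm σ).mul_left (2*T))
      intro n
      rw [norm_smul]
      calc ‖S n T‖ * ‖f.a n‖ ≤ (2 * T * Real.exp (σ * f.lam n)) * ‖f.a n‖ :=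
            mul_le_mul_of_nonneg_right (hSabs n T hT) (norm_nonneg _)
        _ = 2*T * (Real.exp (σ * f.lam n) * ‖f.a n‖) := by ring
    rw [Summable.tsum_const_smul _ hsummand, hkey T hT]
  have hnormlim : Tendsto (fun T => ‖(((2*T)⁻¹ : ℝ) : ℂ) • ∫ t in (-T)..T, Φ t‖) atTop
      (𝓝 ‖c • f.a N‖) := (continuous_norm.tendsto _).comp hJlim
  have hfinal : ‖c • f.a N‖ ≤ f.M σ := by
    refine le_of_tendsto hnormlim ?_
    filter_upwards [eventually_gt_atTop (0:ℝ)] with T hT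
    rw [norm_smul]
    have h2T : ‖(((2*T)⁻¹ : ℝ) : ℂ)‖ = (2*T)⁻¹ := by
      rw [Complex.norm_real, Real.norm_eq_abs, abs_of_pos (by positivity)]
    rw [h2T]
    have hΦle : ∀ t ∈ Set.uIoc (-T) T, ‖Φ t‖ ≤ f.M σ := by
      intro t _
      rw [hΦnorm]
      exact f.norm_le_M σ t
    have := intervalIntegral.norm_integral_le_of_norm_le_const hΦle
    calc (2*T)⁻¹ * ‖∫ t in (-T)..T, Φ t‖ ≤ (2*T)⁻¹ * (f.M σ * |T - (-T)|) :=
          mul_le_mul_of_nonneg_left this (by positivity)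
      _ = f.M σ := by
          rw [show T - (-T) = 2*T by ring, abs_of_pos (by positivity)]
          field_simp
  calc Real.exp (σ * f.lam N) * ‖f.a N‖ = ‖c • f.a N‖ := by
        rw [norm_smul, hcdef, Complex.norm_exp, Complex.ofReal_re]
    _ ≤ f.M σ := hfinal


lemma VVDS.M_tendsto (f : VVDS E) : Tendsto f.M atTop atTop := by
  obtain ⟨N, hN⟩ := f.exists_coeff_ne_zero
  apply tendsto_atTop_mono (fun σ => f.coeff_le_M σ N)
  have h1 : Tendsto (fun σ : ℝ => σ * f.lam N) atTop atTop :=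
    Tendsto.atTop_mul_const (f.lam_pos N) tendsto_id
  exact (Real.tendsto_exp_atTop.comp h1).atTop_mul_const (norm_pos_iff.2 hN)

lemma VVDS.summable_diff (f : VVDS E) (x y : ℝ) :
    Summable (fun n => |Real.exp (x * f.lam n) - Real.exp (y * f.lam n)| * ‖f.a n‖) := by
  refine Summable.of_nonneg_of_le (fun n => by positivity) (fun n => ?_)
    ((f.summable_norm x).add (f.summable_norm y))
  rw [← add_mul]
  apply mul_le_mul_of_nonneg_right _ (norm_nonneg _)
  refine (abs_sub _ _).trans ?_
  rw [abs_of_pos (Real.exp_pos _), abs_of_pos (Real.exp_pos _)]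

lemma VVDS.norm_toFun_sub_le (f : VVDS E) (x y t : ℝ) :
    ‖f.toFun ((x : ℂ) + (t : ℂ) * Complex.I) - f.toFun ((y : ℂ) + (t : ℂ) * Complex.I)‖
      ≤ ∑' n, |Real.exp (x * f.lam n) - Real.exp (y * f.lam n)| * ‖f.a n‖ := by
  have hsub : f.toFun ((x : ℂ) + (t : ℂ) * Complex.I) - f.toFun ((y : ℂ) + (t : ℂ) * Complex.I)
      = ∑' n, (Complex.exp (((x : ℂ) + (t : ℂ) * Complex.I) * (f.lam n : ℂ))
          - Complex.exp (((y : ℂ) + (t : ℂ) * Complex.I) * (f.lam n : ℂ))) • f.a n := by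
    rw [VVDS.toFun, VVDS.toFun, ← Summable.tsum_sub (f.summable_term _) (f.summable_term _)]
    exact tsum_congr fun n => (sub_smul _ _ _).symm
  rw [hsub]
  have hterm : ∀ n, ‖(Complex.exp (((x : ℂ) + (t : ℂ) * Complex.I) * (f.lam n : ℂ))
      - Complex.exp (((y : ℂ) + (t : ℂ) * Complex.I) * (f.lam n : ℂ))) • f.a n‖
      = |Real.exp (x * f.lam n) - Real.exp (y * f.lam n)| * ‖f.a n‖ := by
    intro n
    rw [norm_smul]
    congr 1
    have hfac : ∀ u : ℝ, Complex.exp (((u : ℂ) + (t : ℂ) * Complex.I) * (f.lam n : ℂ))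
        = Complex.exp ((t : ℂ) * Complex.I * (f.lam n : ℂ)) * ((Real.exp (u * f.lam n) : ℝ) : ℂ) := by
      intro u
      rw [Complex.ofReal_exp, ← Complex.exp_add]
      congr 1
      push_cast
      ring
    rw [hfac x, hfac y, ← mul_sub, norm_mul]
    have h1 : ‖Complex.exp ((t : ℂ) * Complex.I * (f.lam n : ℂ))‖ = 1 := by
      rw [Complex.norm_exp]
      have : ((t : ℂ) * Complex.I * (f.lam n : ℂ)).re = 0 := by
        simp [Complex.mul_re, Complex.mul_im]
      rw [this, Real.exp_zero]
    rw [h1, one_mul, ← Complex.ofReal_sub, Complex.norm_real, Real.norm_eq_abs]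
  refine (norm_tsum_le_tsum_norm ?_).trans_eq (tsum_congr hterm)
  simp only [hterm]
  exact f.summable_diff x y

lemma VVDS.M_sub_le (f : VVDS E) (x y : ℝ) :
    f.M x - f.M y ≤ ∑' n, |Real.exp (x * f.lam n) - Real.exp (y * f.lam n)| * ‖f.a n‖ := by
  rw [sub_le_iff_le_add, VVDS.M]
  refine ciSup_le fun t => ?_
  calc ‖f.toFun ((x : ℂ) + (t : ℂ) * Complex.I)‖
      ≤ ‖f.toFun ((y : ℂ) + (t : ℂ) * Complex.I)‖
        + ‖f.toFun ((x : ℂ) + (t : ℂ) * Complex.I) - f.toFun ((y : ℂ) + (t : ℂ) * Complex.I)‖ := by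
        have := norm_sub_norm_le (f.toFun ((x : ℂ) + (t : ℂ) * Complex.I))
          (f.toFun ((y : ℂ) + (t : ℂ) * Complex.I))
        linarith [abs_le.1 (abs_norm_sub_norm_le (f.toFun ((x : ℂ) + (t : ℂ) * Complex.I))
          (f.toFun ((y : ℂ) + (t : ℂ) * Complex.I)))]
    _ ≤ (∑' n, |Real.exp (x * f.lam n) - Real.exp (y * f.lam n)| * ‖f.a n‖) + f.M y := by
        have h1 := f.norm_le_M y t
        have h2 := f.norm_toFun_sub_le x y t
        linarith

lemma VVDS.M_continuous (f : VVDS E) : Continuous f.M := by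
  rw [continuous_iff_continuousAt]
  intro y
  have hΔ : Tendsto (fun x => ∑' n, |Real.exp (x * f.lam n) - Real.exp (y * f.lam n)| * ‖f.a n‖)
      (𝓝 y) (𝓝 0) := by
    have h0 : (0 : ℝ) = ∑' _ : ℕ, (0 : ℝ) := by simp
    rw [h0]
    apply tendsto_tsum_of_dominated_convergence
      (bound := fun n => Real.exp ((y+1) * f.lam n) * ‖f.a n‖) (f.summable_norm (y+1))
    · intro n
      have hc : Continuous fun x : ℝ =>
          |Real.exp (x * f.lam n) - Real.exp (y * f.lam n)| * ‖f.a n‖ := by fun_prop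
      have := hc.tendsto y
      simpa using this
    · filter_upwards [eventually_mem_set.2 (Metric.ball_mem_nhds y one_pos)] with x hx n
      rw [Real.norm_eq_abs, abs_mul, abs_abs, abs_of_nonneg (norm_nonneg _)]
      apply mul_le_mul_of_nonneg_right _ (norm_nonneg _)
      have hxb : x ≤ y + 1 := by
        have := Real.dist_eq x y ▸ (Metric.mem_ball.1 hx)
        have := abs_le.1 this.le
        linarith [this.2]
      have hl := (f.lam_pos n).le
      have e1 : Real.exp (x * f.lam n) ≤ Real.exp ((y+1) * f.lam n) :=
        Real.exp_le_exp.2 (mul_le_mul_of_nonneg_right hxb hl)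
      have e2 : Real.exp (y * f.lam n) ≤ Real.exp ((y+1) * f.lam n) :=
        Real.exp_le_exp.2 (mul_le_mul_of_nonneg_right (by linarith) hl)
      rw [abs_sub_le_iff]
      constructor <;> [skip; skip] <;>
        linarith [(Real.exp_pos (x * f.lam n)).le, (Real.exp_pos (y * f.lam n)).le]
  rw [ContinuousAt, tendsto_iff_dist_tendsto_zero]
  apply squeeze_zero' (Filter.Eventually.of_forall fun x => dist_nonneg)
  · refine Filter.Eventually.of_forall fun x => ?_
    rw [Real.dist_eq, abs_sub_le_iff]
    exact ⟨f.M_sub_le x y, by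
      have := f.M_sub_le y x
      have hsymm : (∑' n, |Real.exp (y * f.lam n) - Real.exp (x * f.lam n)| * ‖f.a n‖)
          = ∑' n, |Real.exp (x * f.lam n) - Real.exp (y * f.lam n)| * ‖f.a n‖ :=
        tsum_congr fun n => by rw [abs_sub_comm]
      linarith [hsymm ▸ this]⟩
  · exact hΔ

lemma VVDS.setM_nonempty (f : VVDS E) (y : ℝ) : {σ : ℝ | y ≤ f.M σ}.Nonempty := by
  obtain ⟨σ, hσ⟩ := (f.M_tendsto.eventually_ge_atTop y).exists
  exact ⟨σ, hσ⟩

lemma VVDS.le_Minv_of_T_lt (f : VVDS E) {b y : ℝ} (hb : f.T b < y) : b ≤ f.Minv y := by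
  refine le_csInf (f.setM_nonempty y) fun σ hσ => ?_
  by_contra hc
  push_neg at hc
  have : f.M σ ≤ f.T b := (f.M_le_T σ).trans (f.T_mono hc.le)
  exact absurd hσ (by simp only [Set.mem_setOf_eq]; linarith)

lemma VVDS.Minv_tendsto (f : VVDS E) : Tendsto f.Minv atTop atTop := by
  rw [tendsto_atTop]
  intro b
  filter_upwards [eventually_gt_atTop (f.T b)] with y hy
  exact f.le_Minv_of_T_lt hy

lemma VVDS.bddBelow_setM (f : VVDS E) {y : ℝ} (hy : f.T 0 < y) :
    BddBelow {σ : ℝ | y ≤ f.M σ} := by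
  refine ⟨0, fun σ hσ => ?_⟩
  by_contra hc
  push_neg at hc
  have : f.M σ ≤ f.T 0 := (f.M_le_T σ).trans (f.T_mono hc.le)
  exact absurd hσ (by simp only [Set.mem_setOf_eq]; linarith)

lemma VVDS.M_Minv (f : VVDS E) {y : ℝ} (hy : f.T 0 < y) : f.M (f.Minv y) = y := by
  have hne := f.setM_nonempty y
  have hbdd := f.bddBelow_setM hy
  have hcl : IsClosed {σ : ℝ | y ≤ f.M σ} := isClosed_le continuous_const f.M_continuous
  have hmem : f.Minv y ∈ {σ : ℝ | y ≤ f.M σ} := hcl.csInf_mem hne hbdd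
  refine le_antisymm ?_ hmem
  by_contra hlt
  push_neg at hlt
  have hopen : IsOpen {σ : ℝ | y < f.M σ} := isOpen_lt continuous_const f.M_continuous
  obtain ⟨ε, hε, hball⟩ := Metric.isOpen_iff.1 hopen _ hlt
  have hmem2 : f.Minv y - ε/2 ∈ {σ : ℝ | y < f.M σ} := by
    apply hball
    rw [Metric.mem_ball, Real.dist_eq]
    rw [abs_of_nonpos (by linarith)]
    linarith
  have : f.Minv y ≤ f.Minv y - ε/2 := csInf_le hbdd (le_of_lt (Set.mem_setOf_eq ▸ hmem2))
  linarith

lemma tendsto_iterlog (k : ℕ) : Tendsto (Real.log^[k]) atTop atTop := by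
  induction k with
  | zero => exact tendsto_id
  | succ k ih =>
    rw [Function.iterate_succ]
    exact ih.comp Real.tendsto_log_atTop

end Aux

theorem stmt_8 (f : VVDS E) (g : VVDS F) (h : VVDS G) (p q m : ℕ)
    (hg1 : (0 : EReal) < relRittLowerOrder m p g h)
    (hg2 : relRittLowerOrder m p g h ≤ relRittOrder m p g h)
    (hg3 : relRittOrder m p g h < ⊤)
    :
    (relRittOrder m q f h = 0 → relRittOrder p q f g = 0) ∧ (relRittLowerOrder m q f h = 0 → relRittLowerOrder p q f g = 0) ∧ (relRittOrder m q f h = ⊤ → relRittOrder p q f g = ⊤) ∧ (relRittLowerOrder m q f h = ⊤ → relRittLowerOrder p q f g = ⊤) := by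
  obtain ⟨l, hl0, hll⟩ := EReal.exists_between_coe_real hg1
  have hl0' : (0:ℝ) < l := by exact_mod_cast hl0
  obtain ⟨r, hρr, _⟩ := EReal.exists_between_coe_real hg3
  have hr0' : (0:ℝ) < r := by
    have h1 : (l : EReal) < (r : EReal) := lt_of_lt_of_le hll (hg2.trans hρr.le)
    have : l < r := by exact_mod_cast h1
    linarith
  have hlam' : (l : EReal) < liminf
      (fun σ : ℝ => ((Real.log^[m] (h.Minv (g.M σ)) / Real.log^[p] σ : ℝ) : EReal)) atTop := hll
  have hρr' : limsup
      (fun σ : ℝ => ((Real.log^[m] (h.Minv (g.M σ)) / Real.log^[p] σ : ℝ) : EReal)) atTop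
      < (r : EReal) := hρr
  have hev1' : ∀ᶠ x : ℝ in atTop, l < Real.log^[m] (h.Minv (g.M x)) / Real.log^[p] x := by
    filter_upwards [eventually_lt_of_lt_liminf hlam'] with x hx
    exact_mod_cast hx
  have hev2' : ∀ᶠ x : ℝ in atTop, Real.log^[m] (h.Minv (g.M x)) / Real.log^[p] x < r := by
    filter_upwards [eventually_lt_of_limsup_lt hρr'] with x hx
    exact_mod_cast hx
  have hev3 : ∀ᶠ x : ℝ in atTop, (1:ℝ) ≤ Real.log^[p] x :=
    (tendsto_iterlog p).eventually_ge_atTop 1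
  have hxall : ∀ᶠ x : ℝ in atTop,
      l * Real.log^[p] x < Real.log^[m] (h.Minv (g.M x)) ∧
      Real.log^[m] (h.Minv (g.M x)) < r * Real.log^[p] x ∧
      (1:ℝ) ≤ Real.log^[p] x := by
    filter_upwards [hev1', hev2', hev3] with x h1 h2 h3
    have hpos : (0:ℝ) < Real.log^[p] x := by linarith
    exact ⟨(lt_div_iff₀ hpos).1 h1, (div_lt_iff₀ hpos).1 h2, h3⟩
  have hMg : Tendsto (fun σ : ℝ => g.Minv (f.M σ)) atTop atTop :=
    g.Minv_tendsto.comp f.M_tendsto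
  have hbig : ∀ᶠ σ : ℝ in atTop,
      l * Real.log^[p] (g.Minv (f.M σ)) < Real.log^[m] (h.Minv (f.M σ)) ∧
      Real.log^[m] (h.Minv (f.M σ)) < r * Real.log^[p] (g.Minv (f.M σ)) ∧
      (1:ℝ) ≤ Real.log^[p] (g.Minv (f.M σ)) := by
    filter_upwards [hMg.eventually hxall, f.M_tendsto.eventually_gt_atTop (g.T 0)] with σ h1 h2
    rwa [g.M_Minv h2] at h1
  have hD : ∀ᶠ σ : ℝ in atTop, (1:ℝ) ≤ Real.log^[q] σ :=
    (tendsto_iterlog q).eventually_ge_atTop 1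
  set Rg : ℝ → ℝ := fun σ => Real.log^[p] (g.Minv (f.M σ)) with hRgdef
  set Rh : ℝ → ℝ := fun σ => Real.log^[m] (h.Minv (f.M σ)) with hRhdef
  set D : ℝ → ℝ := fun σ => Real.log^[q] σ with hDdef
  have hE : ∀ᶠ σ : ℝ in atTop,
      l * (Rg σ / D σ) ≤ Rh σ / D σ ∧ Rh σ / D σ ≤ r * (Rg σ / D σ) ∧
      0 < Rg σ / D σ := by
    filter_upwards [hbig, hD] with σ hb hd
    obtain ⟨h1, h2, h3⟩ := hb
    have hDpos : (0:ℝ) < D σ := by simp only [hDdef]; linarith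
    refine ⟨?_, ?_, div_pos (by simp only [hRgdef]; linarith) hDpos⟩
    · rw [mul_div_assoc']
      exact (div_le_div_iff_of_pos_right hDpos).2 h1.le
    · rw [mul_div_assoc']
      exact (div_le_div_iff_of_pos_right hDpos).2 h2.le
  set u : ℝ → EReal := fun σ => ((Rg σ / D σ : ℝ) : EReal) with hudef
  set v : ℝ → EReal := fun σ => ((Rh σ / D σ : ℝ) : EReal) with hvdef
  have huo : relRittOrder p q f g = limsup u atTop := rfl
  have hul : relRittLowerOrder p q f g = liminf u atTop := rfl
  have hvo : relRittOrder m q f h = limsup v atTop := rfl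
  have hvl : relRittLowerOrder m q f h = liminf v atTop := rfl
  have hge0sup : (0:EReal) ≤ limsup u atTop := by
    have h0 : ∀ᶠ σ : ℝ in atTop, (0:EReal) ≤ u σ := by
      filter_upwards [hE] with σ hσ
      have := hσ.2.2
      simp only [hudef]
      exact_mod_cast this.le
    calc (0:EReal) ≤ liminf u atTop := le_liminf_of_le (by isBoundedDefault) h0
      _ ≤ limsup u atTop := liminf_le_limsup
  have hge0inf : (0:EReal) ≤ liminf u atTop := by
    have h0 : ∀ᶠ σ : ℝ in atTop, (0:EReal) ≤ u σ := by
      filter_upwards [hE] with σ hσ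
      have := hσ.2.2
      simp only [hudef]
      exact_mod_cast this.le
    exact le_liminf_of_le (by isBoundedDefault) h0
  refine ⟨?_, ?_, ?_, ?_⟩
  · intro hv0
    rw [hvo] at hv0
    rw [huo]
    refine le_antisymm ?_ hge0sup
    by_contra hc
    push_neg at hc
    obtain ⟨c, hc0, hcu⟩ := EReal.exists_between_coe_real hc
    have hc0' : (0:ℝ) < c := by exact_mod_cast hc0
    have hlc : limsup v atTop < ((l * c : ℝ) : EReal) := by
      rw [hv0]
      exact_mod_cast (by positivity : (0:ℝ) < l * c)
    have hev : ∀ᶠ σ : ℝ in atTop, u σ ≤ (c : EReal) := by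
      filter_upwards [eventually_lt_of_limsup_lt hlc, hE] with σ hσ hEσ
      have hσ' : Rh σ / D σ < l * c := by
        simp only [hvdef] at hσ; exact_mod_cast hσ
      have : l * (Rg σ / D σ) < l * c := lt_of_le_of_lt hEσ.1 hσ'
      have := (mul_lt_mul_iff_right₀ hl0').1 this
      simp only [hudef]
      exact_mod_cast this.le
    exact absurd (limsup_le_of_le (by isBoundedDefault) hev) (not_le.2 hcu)
  · intro hv0
    rw [hvl] at hv0
    rw [hul]
    refine le_antisymm ?_ hge0inf
    by_contra hc
    push_neg at hc
    obtain ⟨c, hc0, hcu⟩ := EReal.exists_between_coe_real hc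
    have hc0' : (0:ℝ) < c := by exact_mod_cast hc0
    have hlc : liminf v atTop < ((l * c : ℝ) : EReal) := by
      rw [hv0]
      exact_mod_cast (by positivity : (0:ℝ) < l * c)
    have hfr : ∃ᶠ σ : ℝ in atTop, u σ ≤ (c : EReal) := by
      refine ((frequently_lt_of_liminf_lt (by isBoundedDefault) hlc).and_eventually hE).mono ?_
      rintro σ ⟨hσ, hEσ⟩
      have hσ' : Rh σ / D σ < l * c := by
        simp only [hvdef] at hσ; exact_mod_cast hσ
      have : l * (Rg σ / D σ) < l * c := lt_of_le_of_lt hEσ.1 hσ'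
      have := (mul_lt_mul_iff_right₀ hl0').1 this
      simp only [hudef]
      exact_mod_cast this.le
    exact absurd (liminf_le_of_frequently_le hfr) (not_le.2 hcu)
  · intro hv0
    rw [hvo] at hv0
    rw [huo]
    by_contra hne
    have hlt : limsup u atTop < ⊤ := Ne.lt_top hne
    obtain ⟨c, hcu, _⟩ := EReal.exists_between_coe_real hlt
    have hK : ((r * max c 1 : ℝ) : EReal) < limsup v atTop := by
      rw [hv0]
      exact EReal.coe_lt_top _
    have hfr : ∃ᶠ σ : ℝ in atTop, (c : EReal) ≤ u σ := by
      refine ((frequently_lt_of_lt_limsup (by isBoundedDefault) hK).and_eventually hE).mono ?_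
      rintro σ ⟨hσ, hEσ⟩
      have hσ' : r * max c 1 < Rh σ / D σ := by
        simp only [hvdef] at hσ; exact_mod_cast hσ
      have : r * max c 1 < r * (Rg σ / D σ) := lt_of_lt_of_le hσ' hEσ.2.1
      have := (mul_lt_mul_iff_right₀ hr0').1 this
      have : c ≤ Rg σ / D σ := (le_max_left c 1).trans this.le
      simp only [hudef]
      exact_mod_cast this
    exact absurd (le_limsup_of_frequently_le hfr) (not_le.2 hcu)
  · intro hv0
    rw [hvl] at hv0
    rw [hul]
    by_contra hne
    have hlt : liminf u atTop < ⊤ := Ne.lt_top hne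
    obtain ⟨c, hcu, _⟩ := EReal.exists_between_coe_real hlt
    have hK : ((r * max c 1 : ℝ) : EReal) < liminf v atTop := by
      rw [hv0]
      exact EReal.coe_lt_top _
    have hev : ∀ᶠ σ : ℝ in atTop, (c : EReal) ≤ u σ := by
      filter_upwards [eventually_lt_of_lt_liminf hK, hE] with σ hσ hEσ
      have hσ' : r * max c 1 < Rh σ / D σ := by
        simp only [hvdef] at hσ; exact_mod_cast hσ
      have : r * max c 1 < r * (Rg σ / D σ) := lt_of_lt_of_le hσ' hEσ.2.1
      have := (mul_lt_mul_iff_right₀ hr0').1 this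
      have : c ≤ Rg σ / D σ := (le_max_left c 1).trans this.le
      simp only [hudef]
      exact_mod_cast this
    exact absurd (le_liminf_of_le (by isBoundedDefault) hev) (not_le.2 hcu)
end
end

section
/- Let f, g and h be entire functions given by everywhere absolutely convergent vector valued Dirichlet series, and let p ≥ 0, q ≥ 0, m ≥ 0 be integers with 0 < λ_h^{(m,q)}(f) ≤ ρ_h^{(m,q)}(f) < +∞ and 0 < λ_h^{(m,p)}(g) ≤ ρ_h^{(m,p)}(g) < +∞. If λ_h^{(m,p)}(g) = ρ_h^{(m,p)}(g), then ρ_g^{(p,q)}(f) = ρ_h^{(m,q)}(f)/ρ_h^{(m,p)}(g) and λ_g^{(p,q)}(f) = λ_h^{(m,q)}(f)/λ_h^{(m,p)}(g). If instead λ_h^{(m,q)}(f) = ρ_h^{(m,q)}(f), then ρ_g^{(p,q)}(f) = λ_h^{(m,q)}(f)/λ_h^{(m,p)}(g) and λ_g^{(p,q)}(f) = ρ_h^{(m,q)}(f)/ρ_h^{(m,p)}(g). -/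
open Filter Topology

noncomputable section

variable {E F G : Type*} [NormedAddCommGroup E] [NormedSpace ℂ E] [CompleteSpace E]
  [NormedAddCommGroup F] [NormedSpace ℂ F] [CompleteSpace F]
  [NormedAddCommGroup G] [NormedSpace ℂ G] [CompleteSpace G]

namespace RittAux

/-! ### Iterated logarithm helpers -/

lemma tendsto_logIter (m : ℕ) : Tendsto (Real.log^[m]) atTop atTop := by
  induction m with
  | zero => simpa using tendsto_id
  | succ k ih =>
      have : (Real.log^[k+1]) = (Real.log^[k]) ∘ Real.log := by
        funext x; exact Function.iterate_succ_apply Real.log k x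
      rw [this]
      exact ih.comp Real.tendsto_log_atTop

lemma logIter_monoOn (m : ℕ) : ∃ c : ℝ, ∀ x y : ℝ, c ≤ x → x ≤ y → Real.log^[m] x ≤ Real.log^[m] y := by
  induction m with
  | zero => exact ⟨0, fun x y _ hxy => by simpa using hxy⟩
  | succ k ih =>
      obtain ⟨c, hc⟩ := ih
      refine ⟨max 1 (Real.exp c), fun x y hx hxy => ?_⟩
      have hx1 : (1:ℝ) ≤ x := le_trans (le_max_left _ _) hx
      have hcx : c ≤ Real.log x := by
        have := Real.log_le_log (Real.exp_pos c) (le_trans (le_max_right _ _) hx)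
        simpa [Real.log_exp] using this
      have hxy' : Real.log x ≤ Real.log y := Real.log_le_log (by linarith) hxy
      rw [Function.iterate_succ_apply, Function.iterate_succ_apply]
      exact hc _ _ hcx hxy'

lemma logIter_zero (m : ℕ) : Real.log^[m] 0 = 0 :=
  Function.iterate_fixed Real.log_zero m

lemma logIter_add_one (p : ℕ) : ∀ᶠ x in atTop, Real.log^[p] (x + 1) ≤ Real.log^[p] x + 1 := by
  induction p with
  | zero => exact Eventually.of_forall fun x => le_refl _
  | succ k ih =>
      obtain ⟨c, hc⟩ := logIter_monoOn k
      have h1 : ∀ᶠ x : ℝ in atTop, Real.log (x+1) ≤ Real.log x + 1 := by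
        filter_upwards [eventually_ge_atTop (1:ℝ)] with x hx
        have hx0 : (0:ℝ) < x := by linarith
        have : x + 1 ≤ Real.exp 1 * x := by
          nlinarith [Real.add_one_le_exp (1:ℝ)]
        calc Real.log (x+1) ≤ Real.log (Real.exp 1 * x) :=
              Real.log_le_log (by linarith) this
          _ = Real.log x + 1 := by
              rw [Real.log_mul (Real.exp_ne_zero 1) (ne_of_gt hx0), Real.log_exp]; ring
      have h2 : ∀ᶠ x : ℝ in atTop, c ≤ Real.log x := Real.tendsto_log_atTop.eventually_ge_atTop c
      have h3 : ∀ᶠ x : ℝ in atTop, Real.log^[k] (Real.log x + 1) ≤ Real.log^[k] (Real.log x) + 1 :=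
        Real.tendsto_log_atTop.eventually ih
      filter_upwards [h1, h2, h3, eventually_ge_atTop (1:ℝ)] with x hx1 hx2 hx3 hx4
      rw [Function.iterate_succ_apply, Function.iterate_succ_apply]
      have hlog : c ≤ Real.log (x + 1) :=
        le_trans hx2 (Real.log_le_log (by linarith) (by linarith))
      exact le_trans (hc _ _ hlog hx1) hx3

/-! ### EReal limsup/liminf helpers -/

lemma limsup_le_coe_of {G : ℝ → ℝ} {R : ℝ}
    (hyp : ∀ c : ℝ, R < c → ∀ᶠ σ in atTop, G σ ≤ c) :
    limsup (fun σ : ℝ => ((G σ : ℝ) : EReal)) atTop ≤ (R : EReal) := by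
  by_contra hcon
  push_neg at hcon
  obtain ⟨c, hc1, hc2⟩ := EReal.exists_between_coe_real hcon
  have : limsup (fun σ : ℝ => ((G σ : ℝ) : EReal)) atTop ≤ (c : EReal) := by
    apply limsup_le_of_le isCobounded_le_of_bot
    filter_upwards [hyp c (by exact_mod_cast hc1)] with σ hσ
    exact_mod_cast hσ
  exact absurd (lt_of_lt_of_le hc2 this) (lt_irrefl _)

lemma coe_le_limsup_of {G : ℝ → ℝ} {R : ℝ}
    (hyp : ∀ c : ℝ, c < R → ∃ᶠ σ in atTop, c ≤ G σ) :
    (R : EReal) ≤ limsup (fun σ : ℝ => ((G σ : ℝ) : EReal)) atTop := by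
  by_contra hcon
  push_neg at hcon
  obtain ⟨c, hc1, hc2⟩ := EReal.exists_between_coe_real hcon
  have : (c : EReal) ≤ limsup (fun σ : ℝ => ((G σ : ℝ) : EReal)) atTop := by
    refine le_limsup_of_frequently_le ?_ isBounded_le_of_top
    apply (hyp c (by exact_mod_cast hc2)).mono
    intro σ hσ
    exact_mod_cast hσ
  exact absurd (lt_of_le_of_lt this hc1) (lt_irrefl _)

lemma coe_le_liminf_of {G : ℝ → ℝ} {R : ℝ}
    (hyp : ∀ c : ℝ, c < R → ∀ᶠ σ in atTop, c ≤ G σ) :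
    (R : EReal) ≤ liminf (fun σ : ℝ => ((G σ : ℝ) : EReal)) atTop := by
  by_contra hcon
  push_neg at hcon
  obtain ⟨c, hc1, hc2⟩ := EReal.exists_between_coe_real hcon
  have : (c : EReal) ≤ liminf (fun σ : ℝ => ((G σ : ℝ) : EReal)) atTop := by
    apply le_liminf_of_le isCobounded_ge_of_top
    filter_upwards [hyp c (by exact_mod_cast hc2)] with σ hσ
    exact_mod_cast hσ
  exact absurd (lt_of_le_of_lt this hc1) (lt_irrefl _)

lemma liminf_le_coe_of {G : ℝ → ℝ} {R : ℝ}
    (hyp : ∀ c : ℝ, R < c → ∃ᶠ σ in atTop, G σ ≤ c) :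
    liminf (fun σ : ℝ => ((G σ : ℝ) : EReal)) atTop ≤ (R : EReal) := by
  by_contra hcon
  push_neg at hcon
  obtain ⟨c, hc1, hc2⟩ := EReal.exists_between_coe_real hcon
  have : liminf (fun σ : ℝ => ((G σ : ℝ) : EReal)) atTop ≤ (c : EReal) := by
    refine liminf_le_of_frequently_le ?_ isBounded_ge_of_bot
    apply (hyp c (by exact_mod_cast hc1)).mono
    intro σ hσ
    exact_mod_cast hσ
  exact absurd (lt_of_lt_of_le hc2 this) (lt_irrefl _)

lemma exists_eps_upper {a b c : ℝ} (hb : 0 < b) (hc : a / b < c) :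
    ∃ ε : ℝ, 0 < ε ∧ ε < b ∧ (a + ε) / (b - ε) < c := by
  have hcont : Tendsto (fun e : ℝ => (a + e) / (b - e)) (𝓝[>] 0) (𝓝 (a / b)) := by
    apply Tendsto.mono_left _ nhdsWithin_le_nhds
    have : ContinuousAt (fun e : ℝ => (a + e) / (b - e)) 0 := by
      apply ContinuousAt.div
      · fun_prop
      · fun_prop
      · simpa using ne_of_gt hb
    simpa using this.tendsto
  have hev : ∀ᶠ e in 𝓝[>] (0:ℝ), (a + e) / (b - e) < c :=
    hcont.eventually (Filter.Tendsto.eventually_lt_const hc tendsto_id)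
  have hev2 : ∀ᶠ e in 𝓝[>] (0:ℝ), e < b := by
    have : ∀ᶠ e in 𝓝 (0:ℝ), e < b := Filter.Tendsto.eventually_lt_const hb tendsto_id
    exact this.filter_mono nhdsWithin_le_nhds
  have hev3 : ∀ᶠ e in 𝓝[>] (0:ℝ), 0 < e := self_mem_nhdsWithin
  obtain ⟨ε, h1, h2, h3⟩ := (hev.and (hev2.and hev3)).exists
  exact ⟨ε, h3, h2, h1⟩

lemma exists_eps_lower {a b c : ℝ} (ha : 0 < a) (hb : 0 < b) (hc : c < a / b) :
    ∃ ε : ℝ, 0 < ε ∧ ε < a ∧ c < (a - ε) / (b + ε) := by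
  have hcont : Tendsto (fun e : ℝ => (a - e) / (b + e)) (𝓝[>] 0) (𝓝 (a / b)) := by
    apply Tendsto.mono_left _ nhdsWithin_le_nhds
    have : ContinuousAt (fun e : ℝ => (a - e) / (b + e)) 0 := by
      apply ContinuousAt.div
      · fun_prop
      · fun_prop
      · simpa using ne_of_gt hb
    simpa using this.tendsto
  have hev : ∀ᶠ e in 𝓝[>] (0:ℝ), c < (a - e) / (b + e) :=
    hcont.eventually (Filter.Tendsto.eventually_const_lt hc tendsto_id)
  have hev2 : ∀ᶠ e in 𝓝[>] (0:ℝ), e < a := by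
    have : ∀ᶠ e in 𝓝 (0:ℝ), e < a := Filter.Tendsto.eventually_lt_const ha tendsto_id
    exact this.filter_mono nhdsWithin_le_nhds
  have hev3 : ∀ᶠ e in 𝓝[>] (0:ℝ), 0 < e := self_mem_nhdsWithin
  obtain ⟨ε, h1, h2, h3⟩ := (hev.and (hev2.and hev3)).exists
  exact ⟨ε, h3, h2, h1⟩

end RittAux

namespace VVDS

variable {E : Type*} [NormedAddCommGroup E] [NormedSpace ℂ E] [CompleteSpace E]

/-- The majorant series. -/
def S (f : VVDS E) (σ : ℝ) : ℝ := ∑' n, Real.exp (σ * f.lam n) * ‖f.a n‖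

lemma summable_exp (f : VVDS E) (σ : ℝ) :
    Summable (fun n => Real.exp (σ * f.lam n) * ‖f.a n‖) := by
  simpa using f.abs_conv ((σ : ℂ))

lemma norm_term_s9 (f : VVDS E) (s : ℂ) (n : ℕ) :
    ‖Complex.exp (s * (f.lam n : ℂ)) • f.a n‖ = Real.exp (s.re * f.lam n) * ‖f.a n‖ := by
  rw [norm_smul, Complex.norm_exp]
  congr 2
  simp [Complex.mul_re]

lemma summable_term_s9 (f : VVDS E) (s : ℂ) :
    Summable (fun n => Complex.exp (s * (f.lam n : ℂ)) • f.a n) := by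
  apply Summable.of_norm
  simp only [f.norm_term_s9 s]
  exact f.summable_exp s.re

lemma norm_toFun_le_s9 (f : VVDS E) (s : ℂ) : ‖f.toFun s‖ ≤ f.S s.re := by
  have h1 : ‖f.toFun s‖ ≤ ∑' n, ‖Complex.exp (s * (f.lam n : ℂ)) • f.a n‖ := by
    apply norm_tsum_le_tsum_norm
    simp only [f.norm_term_s9 s]
    exact f.summable_exp s.re
  calc ‖f.toFun s‖ ≤ _ := h1
    _ = f.S s.re := tsum_congr (f.norm_term_s9 s)

lemma S_nonneg (f : VVDS E) (σ : ℝ) : 0 ≤ f.S σ :=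
  tsum_nonneg fun n => mul_nonneg (Real.exp_pos _).le (norm_nonneg _)

lemma S_mono (f : VVDS E) : Monotone f.S := by
  intro σ1 σ2 h
  apply Summable.tsum_le_tsum _ (f.summable_exp σ1) (f.summable_exp σ2)
  intro n
  have := (f.lam_pos n).le
  exact mul_le_mul_of_nonneg_right
    (Real.exp_le_exp.mpr (mul_le_mul_of_nonneg_right h this)) (norm_nonneg _)

lemma S_le_of_le (f : VVDS E) {σ σ₀ : ℝ} (h : σ ≤ σ₀) :
    f.S σ ≤ Real.exp ((σ - σ₀) * f.lam 0) * f.S σ₀ := by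
  simp only [S]
  rw [← tsum_mul_left]
  apply Summable.tsum_le_tsum _ (f.summable_exp σ) ((f.summable_exp σ₀).mul_left _)
  intro n
  have hlam : f.lam 0 ≤ f.lam n := f.lam_strictMono.monotone (Nat.zero_le n)
  have h1 : σ * f.lam n = (σ - σ₀) * f.lam n + σ₀ * f.lam n := by ring
  rw [h1, Real.exp_add, mul_assoc]
  apply mul_le_mul_of_nonneg_right _ (mul_nonneg (Real.exp_pos _).le (norm_nonneg _))
  apply Real.exp_le_exp.mpr
  exact mul_le_mul_of_nonpos_left hlam (by linarith)

lemma S_tendsto_atBot (f : VVDS E) : Tendsto f.S atBot (𝓝 0) := by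
  have h1 : Tendsto (fun σ : ℝ => Real.exp ((σ - 0) * f.lam 0) * f.S 0) atBot (𝓝 0) := by
    have h2 : Tendsto (fun σ : ℝ => (σ - 0) * f.lam 0) atBot atBot :=
      (tendsto_atBot_add_const_right _ _ tendsto_id).atBot_mul_const (f.lam_pos 0)
    simpa using (Real.tendsto_exp_atBot.comp h2).mul_const (f.S 0)
  apply tendsto_of_tendsto_of_tendsto_of_le_of_le' tendsto_const_nhds h1
  · exact Eventually.of_forall fun σ => f.S_nonneg σ
  · filter_upwards [eventually_le_atBot (0:ℝ)] with σ hσ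
    exact f.S_le_of_le hσ

lemma re_add_mul_I (σ t : ℝ) : ((σ : ℂ) + (t : ℂ) * Complex.I).re = σ := by simp

lemma norm_line_le_s9 (f : VVDS E) (σ t : ℝ) : ‖f.toFun ((σ:ℂ) + (t:ℂ) * Complex.I)‖ ≤ f.S σ := by
  have := f.norm_toFun_le_s9 ((σ:ℂ) + (t:ℂ) * Complex.I)
  rwa [re_add_mul_I] at this

lemma bddAbove_line_s9 (f : VVDS E) (σ : ℝ) :
    BddAbove (Set.range fun t : ℝ => ‖f.toFun ((σ:ℂ) + (t:ℂ) * Complex.I)‖) := by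
  refine ⟨f.S σ, ?_⟩
  rintro x ⟨t, rfl⟩
  exact f.norm_line_le_s9 σ t

lemma M_le_S (f : VVDS E) (σ : ℝ) : f.M σ ≤ f.S σ :=
  ciSup_le fun t => f.norm_line_le_s9 σ t

lemma le_M (f : VVDS E) (σ t : ℝ) : ‖f.toFun ((σ:ℂ) + (t:ℂ) * Complex.I)‖ ≤ f.M σ :=
  le_ciSup (f.bddAbove_line_s9 σ) t

lemma norm_le_M_s9 (f : VVDS E) (s : ℂ) : ‖f.toFun s‖ ≤ f.M s.re := by
  have h := f.le_M s.re s.im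
  rwa [Complex.re_add_im] at h

lemma M_nonneg_s9 (f : VVDS E) (σ : ℝ) : 0 ≤ f.M σ :=
  le_trans (norm_nonneg _) (f.le_M σ 0)

lemma M_tendsto_atBot (f : VVDS E) : Tendsto f.M atBot (𝓝 0) := by
  apply tendsto_of_tendsto_of_tendsto_of_le_of_le tendsto_const_nhds f.S_tendsto_atBot
    f.M_nonneg_s9 f.M_le_S

lemma differentiable (f : VVDS E) : Differentiable ℂ f.toFun := by
  intro s₀
  set b := s₀.re + 1 with hb
  have hU : IsOpen {z : ℂ | z.re < b} := isOpen_lt Complex.continuous_re continuous_const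
  have hdiff : DifferentiableOn ℂ
      (fun z : ℂ => ∑' n, Complex.exp (z * (f.lam n : ℂ)) • f.a n) {z : ℂ | z.re < b} := by
    apply Complex.differentiableOn_tsum_of_summable_norm (f.summable_exp b)
    · intro n
      exact (((differentiable_id.mul_const _).cexp).smul_const (f.a n)).differentiableOn
    · exact hU
    · intro n z hz
      rw [f.norm_term_s9]
      apply mul_le_mul_of_nonneg_right _ (norm_nonneg _)
      exact Real.exp_le_exp.mpr (mul_le_mul_of_nonneg_right (le_of_lt hz) (f.lam_pos n).le)
  have hmem : s₀ ∈ {z : ℂ | z.re < b} := by simp [hb]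
  have heq : f.toFun = fun z : ℂ => ∑' n, Complex.exp (z * (f.lam n : ℂ)) • f.a n := rfl
  rw [heq]
  exact hdiff.differentiableAt (hU.mem_nhds hmem)

end VVDS

namespace VVDS

variable {E : Type*} [NormedAddCommGroup E] [NormedSpace ℂ E] [CompleteSpace E]

lemma M_interp (f : VVDS E) {σ0 σ2 : ℝ} (h02 : σ0 < σ2) {σ : ℝ} (h0 : σ0 ≤ σ) (h2 : σ ≤ σ2) :
    f.M σ ≤ f.M σ0 ^ (1 - (σ - σ0) / (σ2 - σ0)) * f.M σ2 ^ ((σ - σ0) / (σ2 - σ0)) := by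
  set d : ℝ := σ2 - σ0 with hdd
  have hd : 0 < d := by simp [hdd]; linarith
  have hdne : (d : ℂ) ≠ 0 := by exact_mod_cast ne_of_gt hd
  set t' : ℝ := (σ - σ0) / d with ht'
  set g : ℂ → E := fun w => f.toFun ((σ0 : ℂ) + w * (d : ℂ)) with hg
  have hgdiff : Differentiable ℂ g :=
    f.differentiable.comp ((differentiable_id.mul_const _).const_add _)
  have hre : ∀ w : ℂ, ((σ0 : ℂ) + w * (d : ℂ)).re = σ0 + w.re * d := by
    intro w; simp [Complex.add_re, Complex.mul_re]
  apply ciSup_le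
  intro t
  set z : ℂ := (((σ : ℂ) + (t : ℂ) * Complex.I) - (σ0 : ℂ)) / (d : ℂ) with hz
  have hzre : z.re = t' := by
    rw [hz, Complex.div_ofReal_re]
    simp [ht']
  have hzpt : (σ0 : ℂ) + z * (d : ℂ) = (σ : ℂ) + (t : ℂ) * Complex.I := by
    rw [hz]; field_simp; ring
  have hmem : z ∈ Complex.HadamardThreeLines.verticalClosedStrip 0 1 := by
    show z.re ∈ Set.Icc (0:ℝ) 1
    rw [hzre]
    constructor
    · exact div_nonneg (by linarith) hd.le
    · rw [div_le_one hd]; linarith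
  have key : ‖g z‖ ≤ f.M σ0 ^ (1 - z.re) * f.M σ2 ^ z.re := by
    refine Complex.HadamardThreeLines.norm_le_interp_of_mem_verticalClosedStrip₀₁' g hmem
      hgdiff.diffContOnCl ⟨f.S σ2, ?_⟩ ?_ ?_
    · rintro x ⟨w, hw, rfl⟩
      have hwre : w.re ∈ Set.Icc (0:ℝ) 1 := hw
      simp only [Function.comp_apply, hg]
      calc ‖f.toFun ((σ0 : ℂ) + w * (d : ℂ))‖ ≤ f.S (((σ0 : ℂ) + w * (d : ℂ)).re) :=
            f.norm_toFun_le_s9 _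
        _ ≤ f.S σ2 := by
            apply f.S_mono
            rw [hre]
            nlinarith [hwre.1, hwre.2]
    · intro w hw
      have hwre : w.re = 0 := hw
      calc ‖g w‖ ≤ f.M (((σ0 : ℂ) + w * (d : ℂ)).re) := f.norm_le_M_s9 _
        _ = f.M σ0 := by rw [hre, hwre]; ring_nf
    · intro w hw
      have hwre : w.re = 1 := hw
      calc ‖g w‖ ≤ f.M (((σ0 : ℂ) + w * (d : ℂ)).re) := f.norm_le_M_s9 _
        _ = f.M σ2 := by rw [hre, hwre]; congr 1; simp [hdd]
  rw [hg] at key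
  simp only [hzpt] at key
  rw [hzre] at key
  exact key

lemma M_le_max (f : VVDS E) {σ0 σ2 : ℝ} (h02 : σ0 < σ2) {σ : ℝ} (h0 : σ0 ≤ σ) (h2 : σ ≤ σ2) :
    f.M σ ≤ max (f.M σ0) (f.M σ2) := by
  set t' : ℝ := (σ - σ0) / (σ2 - σ0) with ht'
  have hd : (0:ℝ) < σ2 - σ0 := by linarith
  have ht0 : 0 ≤ t' := div_nonneg (by linarith) hd.le
  have ht1 : t' ≤ 1 := by rw [ht', div_le_one hd]; linarith
  set mx : ℝ := max (f.M σ0) (f.M σ2) with hmx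
  have hmx0 : 0 ≤ mx := le_trans (f.M_nonneg_s9 σ0) (le_max_left _ _)
  calc f.M σ ≤ f.M σ0 ^ (1 - t') * f.M σ2 ^ t' := f.M_interp h02 h0 h2
    _ ≤ mx ^ (1 - t') * mx ^ t' := by
        apply mul_le_mul
        · exact Real.rpow_le_rpow (f.M_nonneg_s9 _) (le_max_left _ _) (by linarith)
        · exact Real.rpow_le_rpow (f.M_nonneg_s9 _) (le_max_right _ _) ht0
        · exact Real.rpow_nonneg (f.M_nonneg_s9 _) _
        · exact Real.rpow_nonneg hmx0 _
    _ = mx ^ ((1 - t') + t') := (Real.rpow_add' hmx0 (by norm_num)).symm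
    _ = mx := by norm_num

lemma M_mono (f : VVDS E) : Monotone f.M := by
  intro σ σ' hle
  rcases eq_or_lt_of_le hle with rfl | hlt
  · exact le_refl _
  by_contra hcon
  push_neg at hcon
  have hpos : 0 < f.M σ := lt_of_le_of_lt (f.M_nonneg_s9 σ') hcon
  obtain ⟨σ0, h1, h2⟩ :=
    ((f.M_tendsto_atBot.eventually_lt_const hpos).and (eventually_lt_atBot σ)).exists
  have := f.M_le_max (lt_trans h2 hlt) h2.le hle
  have hmax : max (f.M σ0) (f.M σ') < f.M σ := max_lt h1 hcon
  linarith

lemma M_lt_M (f : VVDS E) {σ σ' : ℝ} (hlt : σ < σ') (hpos : 0 < f.M σ) : f.M σ < f.M σ' := by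
  have hle : f.M σ ≤ f.M σ' := f.M_mono hlt.le
  rcases lt_or_eq_of_le hle with h | heq
  · exact h
  obtain ⟨σ0, h1, h2⟩ :=
    ((f.M_tendsto_atBot.eventually_lt_const hpos).and (eventually_lt_atBot σ)).exists
  set t' : ℝ := (σ - σ0) / (σ' - σ0) with ht'
  have hd : (0:ℝ) < σ' - σ0 := by linarith
  have ht0 : 0 ≤ t' := div_nonneg (by linarith) hd.le
  have ht1 : t' < 1 := by rw [ht', div_lt_one hd]; linarith
  have hkey := f.M_interp (lt_trans h2 hlt) h2.le hlt.le
  rw [← heq] at hkey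
  have hstrict : f.M σ0 ^ (1 - t') * f.M σ ^ t' < f.M σ ^ (1 - t') * f.M σ ^ t' := by
    apply mul_lt_mul_of_pos_right
    · exact Real.rpow_lt_rpow (f.M_nonneg_s9 σ0) h1 (by linarith)
    · exact Real.rpow_pos_of_pos hpos _
  have hone : f.M σ ^ (1 - t') * f.M σ ^ t' = f.M σ := by
    rw [← Real.rpow_add hpos]; norm_num
  rw [hone] at hstrict
  exact absurd (lt_of_le_of_lt hkey hstrict) (lt_irrefl _)

lemma M_convexOn (f : VVDS E) : ConvexOn ℝ Set.univ f.M := by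
  refine ⟨convex_univ, ?_⟩
  intro x _ y _ a b ha hb hab
  simp only [smul_eq_mul]
  rcases lt_trichotomy x y with hxy | rfl | hyx
  · rcases eq_or_lt_of_le hb with rfl | hb'
    · have ha1 : a = 1 := by linarith
      simp [ha1]
    rcases eq_or_lt_of_le ha with rfl | ha'
    · have hb1 : b = 1 := by linarith
      simp [hb1]
    have hxx : a * x + b * x = x := by rw [← add_mul, hab, one_mul]
    have hyy : a * y + b * y = y := by rw [← add_mul, hab, one_mul]
    have hbx : b * x ≤ b * y := mul_le_mul_of_nonneg_left hxy.le hb'.le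
    have hax : a * x ≤ a * y := mul_le_mul_of_nonneg_left hxy.le ha
    have hmem : x ≤ a * x + b * y ∧ a * x + b * y ≤ y := by
      constructor <;> linarith
    have ht : (a * x + b * y - x) / (y - x) = b := by
      rw [div_eq_iff (ne_of_gt (sub_pos.mpr hxy))]
      linear_combination hxx
    have h1t : 1 - b = a := by linarith
    have := f.M_interp hxy hmem.1 hmem.2
    rw [ht, h1t] at this
    calc f.M (a * x + b * y) ≤ f.M x ^ a * f.M y ^ b := this
      _ ≤ a * f.M x + b * f.M y :=
          Real.geom_mean_le_arith_mean2_weighted ha hb (f.M_nonneg_s9 x) (f.M_nonneg_s9 y) hab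
  · have : a * x + b * x = x := by rw [← add_mul, hab, one_mul]
    rw [this]
    nlinarith [f.M_nonneg_s9 x]
  · rcases eq_or_lt_of_le ha with rfl | ha'
    · have hb1 : b = 1 := by linarith
      simp [hb1]
    rcases eq_or_lt_of_le hb with rfl | hb'
    · have ha1 : a = 1 := by linarith
      simp [ha1]
    have hxx : a * x + b * x = x := by rw [← add_mul, hab, one_mul]
    have hyy : a * y + b * y = y := by rw [← add_mul, hab, one_mul]
    have hby : b * y ≤ b * x := mul_le_mul_of_nonneg_left hyx.le hb
    have hay : a * y ≤ a * x := mul_le_mul_of_nonneg_left hyx.le ha'.le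
    have hmem : y ≤ a * x + b * y ∧ a * x + b * y ≤ x := by
      constructor <;> linarith
    have ht : (a * x + b * y - y) / (x - y) = a := by
      rw [div_eq_iff (ne_of_gt (sub_pos.mpr hyx))]
      linear_combination hyy
    have h1t : 1 - a = b := by linarith
    have := f.M_interp hyx hmem.1 hmem.2
    rw [ht, h1t] at this
    calc f.M (a * x + b * y) ≤ f.M y ^ b * f.M x ^ a := this
      _ = f.M x ^ a * f.M y ^ b := mul_comm _ _
      _ ≤ a * f.M x + b * f.M y :=
          Real.geom_mean_le_arith_mean2_weighted ha hb (f.M_nonneg_s9 x) (f.M_nonneg_s9 y) hab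

lemma M_continuous_s9 (f : VVDS E) : Continuous f.M := by
  rw [← continuousOn_univ]
  exact f.M_convexOn.continuousOn isOpen_univ

lemma M_dichotomy (f : VVDS E) : Tendsto f.M atTop atTop ∨ ∀ σ, f.M σ = 0 := by
  by_cases hb : ∀ b : ℝ, ∃ σ, b ≤ f.M σ
  · exact Or.inl (tendsto_atTop_atTop_of_monotone f.M_mono hb)
  right
  push_neg at hb
  obtain ⟨b, hball⟩ := hb
  have hbd : Bornology.IsBounded (Set.range f.toFun) := by
    rw [isBounded_iff_forall_norm_le]
    exact ⟨b, by rintro x ⟨s, rfl⟩; exact le_trans (f.norm_le_M_s9 s) (hball s.re).le⟩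
  obtain ⟨c, hc⟩ := f.differentiable.exists_eq_const_of_bounded hbd
  have hc0 : c = 0 := by
    have hnorm : ∀ᶠ σ : ℝ in atBot, ‖c‖ ≤ f.S σ := by
      apply Eventually.of_forall
      intro σ
      have : f.toFun ((σ:ℂ)) = c := by rw [hc]; rfl
      calc ‖c‖ = ‖f.toFun ((σ:ℂ))‖ := by rw [this]
        _ ≤ f.S σ := by simpa using f.norm_toFun_le_s9 ((σ:ℂ))
    have hle : ‖c‖ ≤ 0 := ge_of_tendsto f.S_tendsto_atBot hnorm
    exact norm_le_zero_iff.mp hle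
  intro σ
  have : ∀ t : ℝ, ‖f.toFun ((σ:ℂ) + (t:ℂ) * Complex.I)‖ = 0 := by
    intro t; rw [hc, hc0]; simp
  rw [M]
  simp only [this]
  exact ciSup_const

end VVDS
namespace VVDS

variable {E : Type*} [NormedAddCommGroup E] [NormedSpace ℂ E] [CompleteSpace E]

lemma Minv_set_nonempty (f : VVDS E) (hM : Tendsto f.M atTop atTop) (y : ℝ) :
    {σ : ℝ | y ≤ f.M σ}.Nonempty :=
  (hM.eventually_ge_atTop y).exists

lemma Minv_set_bddBelow (f : VVDS E) {y : ℝ} (hy : 0 < y) : BddBelow {σ : ℝ | y ≤ f.M σ} := by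
  obtain ⟨B, hB⟩ := eventually_atBot.mp (f.M_tendsto_atBot.eventually_lt_const hy)
  refine ⟨B, fun σ hσ => ?_⟩
  by_contra hcon
  push_neg at hcon
  exact absurd hσ (not_le.mpr (hB σ hcon.le))

lemma Minv_le (f : VVDS E) {y σ' : ℝ} (hy : 0 < y) (h : y ≤ f.M σ') : f.Minv y ≤ σ' :=
  csInf_le (f.Minv_set_bddBelow hy) h

lemma le_M_Minv (f : VVDS E) (hM : Tendsto f.M atTop atTop) {y : ℝ} (hy : 0 < y) :
    y ≤ f.M (f.Minv y) := by
  have hcl : IsClosed {σ : ℝ | y ≤ f.M σ} := isClosed_le continuous_const f.M_continuous_s9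
  exact hcl.csInf_mem (f.Minv_set_nonempty hM y) (f.Minv_set_bddBelow hy)

lemma Minv_mono (f : VVDS E) (hM : Tendsto f.M atTop atTop) {y1 y2 : ℝ} (hy1 : 0 < y1)
    (h12 : y1 ≤ y2) : f.Minv y1 ≤ f.Minv y2 :=
  csInf_le_csInf (f.Minv_set_bddBelow hy1) (f.Minv_set_nonempty hM y2)
    (fun σ hσ => le_trans h12 hσ)

lemma Minv_tendsto_s9 (f : VVDS E) (hM : Tendsto f.M atTop atTop) :
    Tendsto f.Minv atTop atTop := by
  rw [tendsto_atTop]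
  intro B
  filter_upwards [eventually_ge_atTop (f.S B + 1)] with y hy
  apply le_csInf (f.Minv_set_nonempty hM y)
  intro σ' hσ'
  by_contra hlt
  push_neg at hlt
  have h1 : f.M σ' ≤ f.S B := le_trans (f.M_le_S σ') (f.S_mono hlt.le)
  have h2 : y ≤ f.S B := le_trans hσ' h1
  linarith

lemma M_Minv_add_one (f : VVDS E) (hM : Tendsto f.M atTop atTop) {y : ℝ} (hy : 0 < y) :
    y ≤ f.M (f.Minv y + 1) := by
  obtain ⟨σs, hmem, hlt⟩ :=
    exists_lt_of_csInf_lt (f.Minv_set_nonempty hM y) (lt_add_one (f.Minv y))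
  exact le_trans hmem (f.M_mono hlt.le)

lemma M_Minv_sub_one (f : VVDS E) {y : ℝ} (hy : 0 < y) : f.M (f.Minv y - 1) < y := by
  by_contra hc
  push_neg at hc
  have := f.Minv_le hy hc
  linarith

lemma Minv_M_eq (f : VVDS E) (hM : Tendsto f.M atTop atTop) {σp τ : ℝ} (hpos : 0 < f.M σp)
    (hτ : σp < τ) : f.Minv (f.M τ) = τ := by
  have hMτ : 0 < f.M τ := lt_of_lt_of_le hpos (f.M_mono hτ.le)
  have hle : f.Minv (f.M τ) ≤ τ := f.Minv_le hMτ (le_refl _)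
  have hMJ : f.M τ ≤ f.M (f.Minv (f.M τ)) := f.le_M_Minv hM hMτ
  rcases lt_or_eq_of_le hle with hlt | heq
  · exfalso
    have hJpos : 0 < f.M (f.Minv (f.M τ)) := lt_of_lt_of_le hMτ hMJ
    have hcmp : σp < f.Minv (f.M τ) := by
      by_contra hcon
      push_neg at hcon
      have h1 : f.M (f.Minv (f.M τ)) ≤ f.M σp := f.M_mono hcon
      have h2 : f.M σp < f.M τ := f.M_lt_M hτ hpos
      linarith
    have := f.M_lt_M hlt hJpos
    linarith
  · exact heq

lemma exists_M_eq (f : VVDS E) (hM : Tendsto f.M atTop atTop) {Y : ℝ} (hY : 0 < Y) :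
    ∃ σ, f.M σ = Y := by
  obtain ⟨σ₁, hσ₁⟩ := (hM.eventually_ge_atTop Y).exists
  obtain ⟨B, hB⟩ := eventually_atBot.mp (f.M_tendsto_atBot.eventually_lt_const hY)
  have h0 : f.M (min B σ₁) < Y := hB _ (min_le_left _ _)
  have h01 : min B σ₁ ≤ σ₁ := min_le_right _ _
  have hmem : Y ∈ Set.Icc (f.M (min B σ₁)) (f.M σ₁) := ⟨h0.le, hσ₁⟩
  obtain ⟨σ, _, hσ⟩ := intermediate_value_Icc h01 f.M_continuous_s9.continuousOn hmem
  exact ⟨σ, hσ⟩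

end VVDS
section Extraction

variable {E F : Type*} [NormedAddCommGroup E] [NormedSpace ℂ E] [CompleteSpace E]
  [NormedAddCommGroup F] [NormedSpace ℂ F] [CompleteSpace F]

lemma ev_lt_of_order_lt {f : VVDS E} {g : VVDS F} {p q : ℕ} {c : ℝ}
    (hlt : relRittOrder p q f g < (c : EReal)) :
    ∀ᶠ σ in atTop, Real.log^[p] (g.Minv (f.M σ)) / Real.log^[q] σ < c := by
  have h2 := eventually_lt_of_limsup_lt (b := (c : EReal))
    (u := fun σ : ℝ => ((Real.log^[p] (g.Minv (f.M σ)) / Real.log^[q] σ : ℝ) : EReal))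
    hlt isBounded_le_of_top
  exact h2.mono fun σ hσ => by simpa using hσ

lemma freq_gt_of_lt_order {f : VVDS E} {g : VVDS F} {p q : ℕ} {c : ℝ}
    (hlt : (c : EReal) < relRittOrder p q f g) :
    ∃ᶠ σ in atTop, c < Real.log^[p] (g.Minv (f.M σ)) / Real.log^[q] σ := by
  have h2 := frequently_lt_of_lt_limsup (b := (c : EReal))
    (u := fun σ : ℝ => ((Real.log^[p] (g.Minv (f.M σ)) / Real.log^[q] σ : ℝ) : EReal))
    isCobounded_le_of_bot hlt
  exact h2.mono fun σ hσ => by simpa using hσ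

lemma ev_gt_of_lt_lowerOrder {f : VVDS E} {g : VVDS F} {p q : ℕ} {c : ℝ}
    (hlt : (c : EReal) < relRittLowerOrder p q f g) :
    ∀ᶠ σ in atTop, c < Real.log^[p] (g.Minv (f.M σ)) / Real.log^[q] σ := by
  have h2 := eventually_lt_of_lt_liminf (b := (c : EReal))
    (u := fun σ : ℝ => ((Real.log^[p] (g.Minv (f.M σ)) / Real.log^[q] σ : ℝ) : EReal))
    hlt isBounded_ge_of_bot
  exact h2.mono fun σ hσ => by simpa using hσ

lemma freq_lt_of_lowerOrder_lt {f : VVDS E} {g : VVDS F} {p q : ℕ} {c : ℝ}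
    (hlt : relRittLowerOrder p q f g < (c : EReal)) :
    ∃ᶠ σ in atTop, Real.log^[p] (g.Minv (f.M σ)) / Real.log^[q] σ < c := by
  have h2 := frequently_lt_of_liminf_lt (b := (c : EReal))
    (u := fun σ : ℝ => ((Real.log^[p] (g.Minv (f.M σ)) / Real.log^[q] σ : ℝ) : EReal))
    isCobounded_ge_of_top hlt
  exact h2.mono fun σ hσ => by simpa using hσ

end Extraction

theorem stmt_9 (f : VVDS E) (g : VVDS F) (h : VVDS G) (p q m : ℕ)
    (hf1 : (0 : EReal) < relRittLowerOrder m q f h)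
    (hf2 : relRittLowerOrder m q f h ≤ relRittOrder m q f h)
    (hf3 : relRittOrder m q f h < ⊤)
    (hg1 : (0 : EReal) < relRittLowerOrder m p g h)
    (hg2 : relRittLowerOrder m p g h ≤ relRittOrder m p g h)
    (hg3 : relRittOrder m p g h < ⊤)
    :
    (relRittLowerOrder m p g h = relRittOrder m p g h → relRittOrder p q f g = (((relRittOrder m q f h).toReal / (relRittOrder m p g h).toReal : ℝ) : EReal) ∧ relRittLowerOrder p q f g = (((relRittLowerOrder m q f h).toReal / (relRittLowerOrder m p g h).toReal : ℝ) : EReal)) ∧ (relRittLowerOrder m q f h = relRittOrder m q f h → relRittOrder p q f g = (((relRittLowerOrder m q f h).toReal / (relRittLowerOrder m p g h).toReal : ℝ) : EReal) ∧ relRittLowerOrder p q f g = (((relRittOrder m q f h).toReal / (relRittOrder m p g h).toReal : ℝ) : EReal)) := by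
  -- Part A : nontriviality of f, g, h
  have hMinvh0 : h.Minv 0 = 0 := by
    have huniv : {σ : ℝ | (0:ℝ) ≤ h.M σ} = Set.univ :=
      Set.eq_univ_of_forall fun σ => h.M_nonneg_s9 σ
    show sInf {σ : ℝ | (0:ℝ) ≤ h.M σ} = 0
    rw [huniv]
    apply Real.sInf_of_not_bddBelow
    rintro ⟨B, hB⟩
    have h1 : B ≤ B - 1 := hB (Set.mem_univ (B - 1))
    linarith
  have hMf : Tendsto f.M atTop atTop := by
    rcases f.M_dichotomy with h' | h'
    · exact h'
    exfalso
    have hfun : (fun σ : ℝ => ((Real.log^[m] (h.Minv (f.M σ)) / Real.log^[q] σ : ℝ) : EReal))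
        = fun _ : ℝ => ((0:ℝ) : EReal) := by
      funext σ
      rw [h' σ, hMinvh0, RittAux.logIter_zero, zero_div]
    have hzero : relRittLowerOrder m q f h = ((0:ℝ) : EReal) := by
      rw [relRittLowerOrder, hfun, liminf_const]
    rw [hzero] at hf1
    simp at hf1
  have hMg : Tendsto g.M atTop atTop := by
    rcases g.M_dichotomy with h' | h'
    · exact h'
    exfalso
    have hfun : (fun σ : ℝ => ((Real.log^[m] (h.Minv (g.M σ)) / Real.log^[p] σ : ℝ) : EReal))
        = fun _ : ℝ => ((0:ℝ) : EReal) := by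
      funext σ
      rw [h' σ, hMinvh0, RittAux.logIter_zero, zero_div]
    have hzero : relRittLowerOrder m p g h = ((0:ℝ) : EReal) := by
      rw [relRittLowerOrder, hfun, liminf_const]
    rw [hzero] at hg1
    simp at hg1
  have hMh : Tendsto h.M atTop atTop := by
    rcases h.M_dichotomy with h' | h'
    · exact h'
    exfalso
    have hMinv0 : ∀ y : ℝ, h.Minv y = 0 := by
      intro y
      rcases le_or_gt y 0 with hy | hy
      · have huniv : {σ : ℝ | y ≤ h.M σ} = Set.univ :=
          Set.eq_univ_of_forall fun σ => le_trans hy (h.M_nonneg_s9 σ)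
        show sInf {σ : ℝ | y ≤ h.M σ} = 0
        rw [huniv]
        apply Real.sInf_of_not_bddBelow
        rintro ⟨B, hB⟩
        have h1 : B ≤ B - 1 := hB (Set.mem_univ (B - 1))
        linarith
      · have hemp : {σ : ℝ | y ≤ h.M σ} = ∅ := by
          ext σ
          simp only [Set.mem_setOf_eq, Set.mem_empty_iff_false, iff_false, not_le, h' σ]
          exact hy
        show sInf {σ : ℝ | y ≤ h.M σ} = 0
        rw [hemp, Real.sInf_empty]
    have hfun : (fun σ : ℝ => ((Real.log^[m] (h.Minv (f.M σ)) / Real.log^[q] σ : ℝ) : EReal))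
        = fun _ : ℝ => ((0:ℝ) : EReal) := by
      funext σ
      rw [hMinv0 (f.M σ), RittAux.logIter_zero, zero_div]
    have hzero : relRittLowerOrder m q f h = ((0:ℝ) : EReal) := by
      rw [relRittLowerOrder, hfun, liminf_const]
    rw [hzero] at hf1
    simp at hf1
  -- Part B : real constants
  have hbot : (⊥ : EReal) < (0 : EReal) := by simpa using EReal.bot_lt_coe (0:ℝ)
  have hρfE_ne_top : relRittOrder m q f h ≠ ⊤ := hf3.ne
  have hρfE_ne_bot : relRittOrder m q f h ≠ ⊥ := (lt_of_lt_of_le (lt_trans hbot hf1) hf2).ne'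
  have hlamfE_ne_top : relRittLowerOrder m q f h ≠ ⊤ := (lt_of_le_of_lt hf2 hf3).ne
  have hlamfE_ne_bot : relRittLowerOrder m q f h ≠ ⊥ := (lt_trans hbot hf1).ne'
  have hρgE_ne_top : relRittOrder m p g h ≠ ⊤ := hg3.ne
  have hρgE_ne_bot : relRittOrder m p g h ≠ ⊥ := (lt_of_lt_of_le (lt_trans hbot hg1) hg2).ne'
  have hlamgE_ne_top : relRittLowerOrder m p g h ≠ ⊤ := (lt_of_le_of_lt hg2 hg3).ne
  have hlamgE_ne_bot : relRittLowerOrder m p g h ≠ ⊥ := (lt_trans hbot hg1).ne'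
  set ρf := (relRittOrder m q f h).toReal with hρfdef
  set lamf := (relRittLowerOrder m q f h).toReal with hlamfdef
  set ρg := (relRittOrder m p g h).toReal with hρgdef
  set lamg := (relRittLowerOrder m p g h).toReal with hlamgdef
  have hcρf : ((ρf : ℝ) : EReal) = relRittOrder m q f h := EReal.coe_toReal hρfE_ne_top hρfE_ne_bot
  have hclamf : ((lamf : ℝ) : EReal) = relRittLowerOrder m q f h :=
    EReal.coe_toReal hlamfE_ne_top hlamfE_ne_bot
  have hcρg : ((ρg : ℝ) : EReal) = relRittOrder m p g h := EReal.coe_toReal hρgE_ne_top hρgE_ne_bot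
  have hclamg : ((lamg : ℝ) : EReal) = relRittLowerOrder m p g h :=
    EReal.coe_toReal hlamgE_ne_top hlamgE_ne_bot
  have hlamf_pos : 0 < lamf := by
    have h1 : ((0 : ℝ) : EReal) < ((lamf : ℝ) : EReal) := by
      rw [hclamf]; exact_mod_cast hf1
    exact_mod_cast h1
  have hlamρf : lamf ≤ ρf := by
    have h1 : ((lamf : ℝ) : EReal) ≤ ((ρf : ℝ) : EReal) := by rw [hclamf, hcρf]; exact hf2
    exact_mod_cast h1
  have hρf_pos : 0 < ρf := lt_of_lt_of_le hlamf_pos hlamρf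
  have hlamg_pos : 0 < lamg := by
    have h1 : ((0 : ℝ) : EReal) < ((lamg : ℝ) : EReal) := by
      rw [hclamg]; exact_mod_cast hg1
    exact_mod_cast h1
  have hlamρg : lamg ≤ ρg := by
    have h1 : ((lamg : ℝ) : EReal) ≤ ((ρg : ℝ) : EReal) := by rw [hclamg, hcρg]; exact hg2
    exact_mod_cast h1
  have hρg_pos : 0 < ρg := lt_of_lt_of_le hlamg_pos hlamρg
  -- Part C : structural facts
  obtain ⟨cm, hcm⟩ := RittAux.logIter_monoOn m
  have hDq : Tendsto (fun σ : ℝ => Real.log^[q] σ) atTop atTop := RittAux.tendsto_logIter q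
  have hDp : Tendsto (fun τ : ℝ => Real.log^[p] τ) atTop atTop := RittAux.tendsto_logIter p
  have hIg : Tendsto (fun σ : ℝ => g.Minv (f.M σ)) atTop atTop := (g.Minv_tendsto_s9 hMg).comp hMf
  have hIh : Tendsto (fun σ : ℝ => h.Minv (f.M σ)) atTop atTop := (h.Minv_tendsto_s9 hMh).comp hMf
  have hVIh : Tendsto (fun τ : ℝ => h.Minv (g.M τ)) atTop atTop := (h.Minv_tendsto_s9 hMh).comp hMg
  obtain ⟨σg, hσg⟩ := (hMg.eventually_gt_atTop 0).exists
  obtain ⟨τ₀, hτ₀⟩ := eventually_atTop.mp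
    ((hVIh.eventually_ge_atTop cm).and (hMg.eventually_gt_atTop 0))
  have hchain : ∀ᶠ σ in atTop,
      Real.log^[m] (h.Minv (g.M (g.Minv (f.M σ) - 1))) ≤ Real.log^[m] (h.Minv (f.M σ)) ∧
      Real.log^[m] (h.Minv (f.M σ)) ≤ Real.log^[m] (h.Minv (g.M (g.Minv (f.M σ) + 1))) := by
    filter_upwards [hMf.eventually_gt_atTop 0, hIg.eventually_ge_atTop (τ₀ + 1),
      hIh.eventually_ge_atTop cm] with σ hc1 hc2 hc3
    have hI1 : τ₀ ≤ g.Minv (f.M σ) - 1 := by linarith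
    obtain ⟨hcmV, hMgpos⟩ := hτ₀ _ hI1
    constructor
    · have hlt : g.M (g.Minv (f.M σ) - 1) < f.M σ := g.M_Minv_sub_one hc1
      have h5 : h.Minv (g.M (g.Minv (f.M σ) - 1)) ≤ h.Minv (f.M σ) :=
        h.Minv_mono hMh hMgpos hlt.le
      exact hcm _ _ hcmV h5
    · have h6 : f.M σ ≤ g.M (g.Minv (f.M σ) + 1) := g.M_Minv_add_one hMg hc1
      have h7 : h.Minv (f.M σ) ≤ h.Minv (g.M (g.Minv (f.M σ) + 1)) := h.Minv_mono hMh hc1 h6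
      exact hcm _ _ hc3 h7
  have hW1 : ∀ᶠ σ in atTop,
      Real.log^[p] (g.Minv (f.M σ)) ≤ Real.log^[p] (g.Minv (f.M σ) - 1) + 1 := by
    have ht : Tendsto (fun σ : ℝ => g.Minv (f.M σ) - 1) atTop atTop :=
      tendsto_atTop_add_const_right atTop (-1) hIg
    filter_upwards [ht.eventually (RittAux.logIter_add_one p)] with σ hσ
    have h9 : g.Minv (f.M σ) - 1 + 1 = g.Minv (f.M σ) := by ring
    rwa [h9] at hσ
  have hW2 : ∀ᶠ σ in atTop,
      Real.log^[p] (g.Minv (f.M σ) + 1) ≤ Real.log^[p] (g.Minv (f.M σ)) + 1 :=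
    hIg.eventually (RittAux.logIter_add_one p)
  -- Part D : epsilon bounds
  have hU_ub : ∀ ε : ℝ, 0 < ε → ∀ᶠ σ in atTop,
      Real.log^[m] (h.Minv (f.M σ)) < (ρf + ε) * Real.log^[q] σ := by
    intro ε hε
    have h1 : relRittOrder m q f h < ((ρf + ε : ℝ) : EReal) := by
      rw [← hcρf]; exact_mod_cast lt_add_of_pos_right ρf hε
    filter_upwards [ev_lt_of_order_lt h1, hDq.eventually_gt_atTop 0] with σ hσ hD
    exact (div_lt_iff₀ hD).mp hσ
  have hU_lb : ∀ ε : ℝ, 0 < ε → ∀ᶠ σ in atTop,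
      (lamf - ε) * Real.log^[q] σ < Real.log^[m] (h.Minv (f.M σ)) := by
    intro ε hε
    have h1 : ((lamf - ε : ℝ) : EReal) < relRittLowerOrder m q f h := by
      rw [← hclamf]; exact_mod_cast sub_lt_self lamf hε
    filter_upwards [ev_gt_of_lt_lowerOrder h1, hDq.eventually_gt_atTop 0] with σ hσ hD
    exact (lt_div_iff₀ hD).mp hσ
  have hU_freq_lb : ∀ ε : ℝ, 0 < ε → ∃ᶠ σ in atTop,
      (ρf - ε) * Real.log^[q] σ < Real.log^[m] (h.Minv (f.M σ)) ∧ 0 < Real.log^[q] σ := by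
    intro ε hε
    have h1 : ((ρf - ε : ℝ) : EReal) < relRittOrder m q f h := by
      rw [← hcρf]; exact_mod_cast sub_lt_self ρf hε
    refine ((freq_gt_of_lt_order h1).and_eventually (hDq.eventually_gt_atTop 0)).mono ?_
    rintro σ ⟨hσ, hD⟩
    exact ⟨(lt_div_iff₀ hD).mp hσ, hD⟩
  have hU_freq_ub : ∀ ε : ℝ, 0 < ε → ∃ᶠ σ in atTop,
      Real.log^[m] (h.Minv (f.M σ)) < (lamf + ε) * Real.log^[q] σ ∧ 0 < Real.log^[q] σ := by
    intro ε hε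
    have h1 : relRittLowerOrder m q f h < ((lamf + ε : ℝ) : EReal) := by
      rw [← hclamf]; exact_mod_cast lt_add_of_pos_right lamf hε
    refine ((freq_lt_of_lowerOrder_lt h1).and_eventually (hDq.eventually_gt_atTop 0)).mono ?_
    rintro σ ⟨hσ, hD⟩
    exact ⟨(div_lt_iff₀ hD).mp hσ, hD⟩
  have hV_ub : ∀ ε : ℝ, 0 < ε → ∀ᶠ τ in atTop,
      Real.log^[m] (h.Minv (g.M τ)) < (ρg + ε) * Real.log^[p] τ := by
    intro ε hε
    have h1 : relRittOrder m p g h < ((ρg + ε : ℝ) : EReal) := by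
      rw [← hcρg]; exact_mod_cast lt_add_of_pos_right ρg hε
    filter_upwards [ev_lt_of_order_lt h1, hDp.eventually_gt_atTop 0] with τ hτ hD
    exact (div_lt_iff₀ hD).mp hτ
  have hV_lb : ∀ ε : ℝ, 0 < ε → ∀ᶠ τ in atTop,
      (lamg - ε) * Real.log^[p] τ < Real.log^[m] (h.Minv (g.M τ)) := by
    intro ε hε
    have h1 : ((lamg - ε : ℝ) : EReal) < relRittLowerOrder m p g h := by
      rw [← hclamg]; exact_mod_cast sub_lt_self lamg hε
    filter_upwards [ev_gt_of_lt_lowerOrder h1, hDp.eventually_gt_atTop 0] with τ hτ hD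
    exact (lt_div_iff₀ hD).mp hτ
  have hV_freq_ub : ∀ ε : ℝ, 0 < ε → ∃ᶠ τ in atTop,
      Real.log^[m] (h.Minv (g.M τ)) < (lamg + ε) * Real.log^[p] τ := by
    intro ε hε
    have h1 : relRittLowerOrder m p g h < ((lamg + ε : ℝ) : EReal) := by
      rw [← hclamg]; exact_mod_cast lt_add_of_pos_right lamg hε
    refine ((freq_lt_of_lowerOrder_lt h1).and_eventually (hDp.eventually_gt_atTop 0)).mono ?_
    rintro τ ⟨hτ, hD⟩
    exact (div_lt_iff₀ hD).mp hτ
  have hV_freq_lb : ∀ ε : ℝ, 0 < ε → ∃ᶠ τ in atTop,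
      (ρg - ε) * Real.log^[p] τ < Real.log^[m] (h.Minv (g.M τ)) := by
    intro ε hε
    have h1 : ((ρg - ε : ℝ) : EReal) < relRittOrder m p g h := by
      rw [← hcρg]; exact_mod_cast sub_lt_self ρg hε
    refine ((freq_gt_of_lt_order h1).and_eventually (hDp.eventually_gt_atTop 0)).mono ?_
    rintro τ ⟨hτ, hD⟩
    exact (lt_div_iff₀ hD).mp hτ
  -- Part E : the six estimates
  have hE1 : ∀ ε : ℝ, 0 < ε → ε < lamg → ∀ᶠ σ in atTop,
      Real.log^[p] (g.Minv (f.M σ)) ≤ (ρf + ε) / (lamg - ε) * Real.log^[q] σ + 1 := by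
    intro ε hε hεlam
    have hfac : 0 < lamg - ε := by linarith
    obtain ⟨T1, hT1⟩ := eventually_atTop.mp (hV_lb ε hε)
    filter_upwards [hchain, hU_ub ε hε, hW1, hIg.eventually_ge_atTop (T1 + 1)]
      with σ hch hub hw1 hT
    have hVlow : (lamg - ε) * Real.log^[p] (g.Minv (f.M σ) - 1) <
        Real.log^[m] (h.Minv (g.M (g.Minv (f.M σ) - 1))) := hT1 _ (by linarith)
    have h10 : (lamg - ε) * (Real.log^[p] (g.Minv (f.M σ)) - 1) ≤
        (lamg - ε) * Real.log^[p] (g.Minv (f.M σ) - 1) :=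
      mul_le_mul_of_nonneg_left (by linarith) hfac.le
    have h11 : (lamg - ε) * (Real.log^[p] (g.Minv (f.M σ)) - 1) < (ρf + ε) * Real.log^[q] σ := by
      calc (lamg - ε) * (Real.log^[p] (g.Minv (f.M σ)) - 1)
          ≤ (lamg - ε) * Real.log^[p] (g.Minv (f.M σ) - 1) := h10
        _ < Real.log^[m] (h.Minv (g.M (g.Minv (f.M σ) - 1))) := hVlow
        _ ≤ Real.log^[m] (h.Minv (f.M σ)) := hch.1
        _ < (ρf + ε) * Real.log^[q] σ := hub
    have h12 : Real.log^[p] (g.Minv (f.M σ)) - 1 < (ρf + ε) * Real.log^[q] σ / (lamg - ε) :=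
      (lt_div_iff₀' hfac).mpr h11
    have h13 : (ρf + ε) * Real.log^[q] σ / (lamg - ε)
        = (ρf + ε) / (lamg - ε) * Real.log^[q] σ := by ring
    linarith
  have hE3 : ∀ ε : ℝ, 0 < ε → ∀ᶠ σ in atTop,
      (lamf - ε) / (ρg + ε) * Real.log^[q] σ - 1 ≤ Real.log^[p] (g.Minv (f.M σ)) := by
    intro ε hε
    have hfac : 0 < ρg + ε := by linarith
    obtain ⟨T2, hT2⟩ := eventually_atTop.mp (hV_ub ε hε)
    filter_upwards [hchain, hU_lb ε hε, hW2, hIg.eventually_ge_atTop T2]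
      with σ hch hlb hw2 hT
    have hVup : Real.log^[m] (h.Minv (g.M (g.Minv (f.M σ) + 1))) <
        (ρg + ε) * Real.log^[p] (g.Minv (f.M σ) + 1) := hT2 _ (by linarith)
    have h11 : (lamf - ε) * Real.log^[q] σ <
        (ρg + ε) * (Real.log^[p] (g.Minv (f.M σ)) + 1) := by
      calc (lamf - ε) * Real.log^[q] σ < Real.log^[m] (h.Minv (f.M σ)) := hlb
        _ ≤ Real.log^[m] (h.Minv (g.M (g.Minv (f.M σ) + 1))) := hch.2
        _ < (ρg + ε) * Real.log^[p] (g.Minv (f.M σ) + 1) := hVup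
        _ ≤ (ρg + ε) * (Real.log^[p] (g.Minv (f.M σ)) + 1) :=
            mul_le_mul_of_nonneg_left hw2 hfac.le
    have h12 : (lamf - ε) * Real.log^[q] σ / (ρg + ε) ≤ Real.log^[p] (g.Minv (f.M σ)) + 1 :=
      (div_le_iff₀' hfac).mpr h11.le
    have h13 : (lamf - ε) * Real.log^[q] σ / (ρg + ε)
        = (lamf - ε) / (ρg + ε) * Real.log^[q] σ := by ring
    linarith
  have hE2 : ∀ ε : ℝ, 0 < ε → ∃ᶠ σ in atTop,
      ((ρf - ε) / (ρg + ε) * Real.log^[q] σ - 1 ≤ Real.log^[p] (g.Minv (f.M σ))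
        ∧ 0 < Real.log^[q] σ) := by
    intro ε hε
    have hfac : 0 < ρg + ε := by linarith
    obtain ⟨T2, hT2⟩ := eventually_atTop.mp (hV_ub ε hε)
    refine ((hU_freq_lb ε hε).and_eventually
      (hchain.and (hW2.and (hIg.eventually_ge_atTop T2)))).mono ?_
    rintro σ ⟨⟨hflb, hDqσ⟩, hch, hw2, hT⟩
    refine ⟨?_, hDqσ⟩
    have hVup : Real.log^[m] (h.Minv (g.M (g.Minv (f.M σ) + 1))) <
        (ρg + ε) * Real.log^[p] (g.Minv (f.M σ) + 1) := hT2 _ (by linarith)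
    have h11 : (ρf - ε) * Real.log^[q] σ <
        (ρg + ε) * (Real.log^[p] (g.Minv (f.M σ)) + 1) := by
      calc (ρf - ε) * Real.log^[q] σ < Real.log^[m] (h.Minv (f.M σ)) := hflb
        _ ≤ Real.log^[m] (h.Minv (g.M (g.Minv (f.M σ) + 1))) := hch.2
        _ < (ρg + ε) * Real.log^[p] (g.Minv (f.M σ) + 1) := hVup
        _ ≤ (ρg + ε) * (Real.log^[p] (g.Minv (f.M σ)) + 1) :=
            mul_le_mul_of_nonneg_left hw2 hfac.le
    have h12 : (ρf - ε) * Real.log^[q] σ / (ρg + ε) ≤ Real.log^[p] (g.Minv (f.M σ)) + 1 :=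
      (div_le_iff₀' hfac).mpr h11.le
    have h13 : (ρf - ε) * Real.log^[q] σ / (ρg + ε)
        = (ρf - ε) / (ρg + ε) * Real.log^[q] σ := by ring
    linarith
  have hE4 : ∀ ε : ℝ, 0 < ε → ε < lamg → ∃ᶠ σ in atTop,
      (Real.log^[p] (g.Minv (f.M σ)) ≤ (lamf + ε) / (lamg - ε) * Real.log^[q] σ + 1
        ∧ 0 < Real.log^[q] σ) := by
    intro ε hε hεlam
    have hfac : 0 < lamg - ε := by linarith
    obtain ⟨T1, hT1⟩ := eventually_atTop.mp (hV_lb ε hε)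
    refine ((hU_freq_ub ε hε).and_eventually
      (hchain.and (hW1.and (hIg.eventually_ge_atTop (T1 + 1))))).mono ?_
    rintro σ ⟨⟨hfub, hDqσ⟩, hch, hw1, hT⟩
    refine ⟨?_, hDqσ⟩
    have hVlow : (lamg - ε) * Real.log^[p] (g.Minv (f.M σ) - 1) <
        Real.log^[m] (h.Minv (g.M (g.Minv (f.M σ) - 1))) := hT1 _ (by linarith)
    have h10 : (lamg - ε) * (Real.log^[p] (g.Minv (f.M σ)) - 1) ≤
        (lamg - ε) * Real.log^[p] (g.Minv (f.M σ) - 1) :=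
      mul_le_mul_of_nonneg_left (by linarith) hfac.le
    have h11 : (lamg - ε) * (Real.log^[p] (g.Minv (f.M σ)) - 1) < (lamf + ε) * Real.log^[q] σ := by
      calc (lamg - ε) * (Real.log^[p] (g.Minv (f.M σ)) - 1)
          ≤ (lamg - ε) * Real.log^[p] (g.Minv (f.M σ) - 1) := h10
        _ < Real.log^[m] (h.Minv (g.M (g.Minv (f.M σ) - 1))) := hVlow
        _ ≤ Real.log^[m] (h.Minv (f.M σ)) := hch.1
        _ < (lamf + ε) * Real.log^[q] σ := hfub
    have h12 : Real.log^[p] (g.Minv (f.M σ)) - 1 < (lamf + ε) * Real.log^[q] σ / (lamg - ε) :=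
      (lt_div_iff₀' hfac).mpr h11
    have h13 : (lamf + ε) * Real.log^[q] σ / (lamg - ε)
        = (lamf + ε) / (lamg - ε) * Real.log^[q] σ := by ring
    linarith
  have hE5 : ∀ ε : ℝ, 0 < ε → ∃ᶠ σ in atTop,
      ((lamf - ε) / (lamg + ε) * Real.log^[q] σ ≤ Real.log^[p] (g.Minv (f.M σ))
        ∧ 0 < Real.log^[q] σ) := by
    intro ε hε
    have hfac : 0 < lamg + ε := by linarith
    rw [frequently_atTop]
    intro Th
    obtain ⟨Sig0, hSig0⟩ := eventually_atTop.mp ((hU_lb ε hε).and (hDq.eventually_gt_atTop 0))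
    have hτev : ∀ᶠ τ in atTop, σg < τ ∧ f.S (max Th Sig0) < g.M τ ∧ 0 < g.M τ := by
      filter_upwards [eventually_gt_atTop σg, hMg.eventually_gt_atTop (f.S (max Th Sig0)),
        hMg.eventually_gt_atTop 0] with τ a b c
      exact ⟨a, b, c⟩
    obtain ⟨τ, hτT, hτσg, hτS, hτpos⟩ := ((hV_freq_ub ε hε).and_eventually hτev).exists
    obtain ⟨σ, hσeq⟩ := f.exists_M_eq hMf hτpos
    have hσTh' : max Th Sig0 < σ := by
      by_contra hcon
      push_neg at hcon
      have h1 : f.M σ ≤ f.S (max Th Sig0) := le_trans (f.M_le_S σ) (f.S_mono hcon)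
      rw [hσeq] at h1
      linarith
    obtain ⟨hUσ, hDqσ⟩ := hSig0 σ (le_trans (le_max_right _ _) hσTh'.le)
    refine ⟨σ, le_trans (le_max_left _ _) hσTh'.le, ?_, hDqσ⟩
    have hUV : Real.log^[m] (h.Minv (f.M σ)) = Real.log^[m] (h.Minv (g.M τ)) := by rw [hσeq]
    have hWτ : g.Minv (f.M σ) = τ := by rw [hσeq]; exact g.Minv_M_eq hMg hσg hτσg
    have h14 : (lamf - ε) * Real.log^[q] σ < (lamg + ε) * Real.log^[p] τ := by
      calc (lamf - ε) * Real.log^[q] σ < Real.log^[m] (h.Minv (f.M σ)) := hUσ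
        _ = Real.log^[m] (h.Minv (g.M τ)) := hUV
        _ < (lamg + ε) * Real.log^[p] τ := hτT
    rw [hWτ]
    have h15 : (lamf - ε) / (lamg + ε) * Real.log^[q] σ
        = (lamf - ε) * Real.log^[q] σ / (lamg + ε) := by ring
    rw [h15, div_le_iff₀ hfac]
    linarith
  have hE6 : ∀ ε : ℝ, 0 < ε → ε < ρg → ∃ᶠ σ in atTop,
      (Real.log^[p] (g.Minv (f.M σ)) ≤ (ρf + ε) / (ρg - ε) * Real.log^[q] σ
        ∧ 0 < Real.log^[q] σ) := by
    intro ε hε hερ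
    have hfac : 0 < ρg - ε := by linarith
    rw [frequently_atTop]
    intro Th
    obtain ⟨Sig0, hSig0⟩ := eventually_atTop.mp ((hU_ub ε hε).and (hDq.eventually_gt_atTop 0))
    have hτev : ∀ᶠ τ in atTop, σg < τ ∧ f.S (max Th Sig0) < g.M τ ∧ 0 < g.M τ := by
      filter_upwards [eventually_gt_atTop σg, hMg.eventually_gt_atTop (f.S (max Th Sig0)),
        hMg.eventually_gt_atTop 0] with τ a b c
      exact ⟨a, b, c⟩
    obtain ⟨τ, hτT, hτσg, hτS, hτpos⟩ := ((hV_freq_lb ε hε).and_eventually hτev).exists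
    obtain ⟨σ, hσeq⟩ := f.exists_M_eq hMf hτpos
    have hσTh' : max Th Sig0 < σ := by
      by_contra hcon
      push_neg at hcon
      have h1 : f.M σ ≤ f.S (max Th Sig0) := le_trans (f.M_le_S σ) (f.S_mono hcon)
      rw [hσeq] at h1
      linarith
    obtain ⟨hUσ, hDqσ⟩ := hSig0 σ (le_trans (le_max_right _ _) hσTh'.le)
    refine ⟨σ, le_trans (le_max_left _ _) hσTh'.le, ?_, hDqσ⟩
    have hUV : Real.log^[m] (h.Minv (f.M σ)) = Real.log^[m] (h.Minv (g.M τ)) := by rw [hσeq]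
    have hWτ : g.Minv (f.M σ) = τ := by rw [hσeq]; exact g.Minv_M_eq hMg hσg hτσg
    have h14 : (ρg - ε) * Real.log^[p] τ < (ρf + ε) * Real.log^[q] σ := by
      calc (ρg - ε) * Real.log^[p] τ < Real.log^[m] (h.Minv (g.M τ)) := hτT
        _ = Real.log^[m] (h.Minv (f.M σ)) := hUV.symm
        _ < (ρf + ε) * Real.log^[q] σ := hUσ
    rw [hWτ]
    have h15 : (ρf + ε) / (ρg - ε) * Real.log^[q] σ
        = (ρf + ε) * Real.log^[q] σ / (ρg - ε) := by ring
    rw [h15, le_div_iff₀ hfac]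
    linarith
  -- Part F : the six bounds on the relative order/lower order of f w.r.t. g
  have ub1 : relRittOrder p q f g ≤ ((ρf / lamg : ℝ) : EReal) := by
    apply RittAux.limsup_le_coe_of
    intro c hc
    obtain ⟨ε, hε, hεlam, hlt⟩ := RittAux.exists_eps_upper hlamg_pos hc
    filter_upwards [hE1 ε hε hεlam, hDq.eventually_gt_atTop 0,
      hDq.eventually_ge_atTop (1 / (c - (ρf + ε) / (lamg - ε)))] with σ h1 h2 h3
    rw [div_le_iff₀ h2]
    have h4 : 1 ≤ Real.log^[q] σ * (c - (ρf + ε) / (lamg - ε)) :=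
      (div_le_iff₀ (by linarith)).mp h3
    nlinarith [h1, h4]
  have lb1 : ((ρf / ρg : ℝ) : EReal) ≤ relRittOrder p q f g := by
    apply RittAux.coe_le_limsup_of
    intro c hc
    obtain ⟨ε, hε, hερ, hgt⟩ := RittAux.exists_eps_lower hρf_pos hρg_pos hc
    refine ((hE2 ε hε).and_eventually
      (hDq.eventually_ge_atTop (1 / ((ρf - ε) / (ρg + ε) - c)))).mono ?_
    rintro σ ⟨⟨h1, h2⟩, h3⟩
    rw [le_div_iff₀ h2]
    have h4 : 1 ≤ Real.log^[q] σ * ((ρf - ε) / (ρg + ε) - c) :=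
      (div_le_iff₀ (by linarith)).mp h3
    nlinarith [h1, h4]
  have lb2 : ((lamf / ρg : ℝ) : EReal) ≤ relRittLowerOrder p q f g := by
    apply RittAux.coe_le_liminf_of
    intro c hc
    obtain ⟨ε, hε, hεlam, hgt⟩ := RittAux.exists_eps_lower hlamf_pos hρg_pos hc
    filter_upwards [hE3 ε hε, hDq.eventually_gt_atTop 0,
      hDq.eventually_ge_atTop (1 / ((lamf - ε) / (ρg + ε) - c))] with σ h1 h2 h3
    rw [le_div_iff₀ h2]
    have h4 : 1 ≤ Real.log^[q] σ * ((lamf - ε) / (ρg + ε) - c) :=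
      (div_le_iff₀ (by linarith)).mp h3
    nlinarith [h1, h4]
  have ub2 : relRittLowerOrder p q f g ≤ ((lamf / lamg : ℝ) : EReal) := by
    apply RittAux.liminf_le_coe_of
    intro c hc
    obtain ⟨ε, hε, hεlam, hlt⟩ := RittAux.exists_eps_upper hlamg_pos hc
    refine ((hE4 ε hε hεlam).and_eventually
      (hDq.eventually_ge_atTop (1 / (c - (lamf + ε) / (lamg - ε))))).mono ?_
    rintro σ ⟨⟨h1, h2⟩, h3⟩
    rw [div_le_iff₀ h2]
    have h4 : 1 ≤ Real.log^[q] σ * (c - (lamf + ε) / (lamg - ε)) :=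
      (div_le_iff₀ (by linarith)).mp h3
    nlinarith [h1, h4]
  have lb3 : ((lamf / lamg : ℝ) : EReal) ≤ relRittOrder p q f g := by
    apply RittAux.coe_le_limsup_of
    intro c hc
    obtain ⟨ε, hε, hεlam, hgt⟩ := RittAux.exists_eps_lower hlamf_pos hlamg_pos hc
    refine (hE5 ε hε).mono ?_
    rintro σ ⟨h1, h2⟩
    rw [le_div_iff₀ h2]
    nlinarith [mul_le_mul_of_nonneg_right hgt.le h2.le, h1]
  have ub3 : relRittLowerOrder p q f g ≤ ((ρf / ρg : ℝ) : EReal) := by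
    apply RittAux.liminf_le_coe_of
    intro c hc
    obtain ⟨ε, hε, hερ, hlt⟩ := RittAux.exists_eps_upper hρg_pos hc
    refine (hE6 ε hε hερ).mono ?_
    rintro σ ⟨h1, h2⟩
    rw [div_le_iff₀ h2]
    nlinarith [mul_le_mul_of_nonneg_right hlt.le h2.le, h1]
  -- Part G : conclusion
  constructor
  · intro hgeq
    have hlamρg_eq : lamg = ρg := by rw [hlamgdef, hρgdef, hgeq]
    constructor
    · apply le_antisymm
      · have h1 := ub1
        rwa [hlamρg_eq] at h1
      · exact lb1
    · apply le_antisymm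
      · exact ub2
      · have h1 := lb2
        rwa [← hlamρg_eq] at h1
  · intro hfeq
    have hlamρf_eq : lamf = ρf := by rw [hlamfdef, hρfdef, hfeq]
    constructor
    · apply le_antisymm
      · have h1 := ub1
        rwa [← hlamρf_eq] at h1
      · exact lb3
    · apply le_antisymm
      · exact ub3
      · have h1 := lb2
        rwa [hlamρf_eq] at h1
end
end
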